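/- arXiv:1112.4100 — 7 statements merged into one kernel-verified Lean document; each statement's English description precedes it below -/
import Mathlib

section
/- Let h: ℝ^d → (0,∞) be differentiable with |∇h(x)| ≤ 1/(16√d) for all x, and fix a unit vector y ∈ B(0,1). Then the map Φ(x) = x + h(x)y is a diffeomorphism-like change of variables whose Jacobian determinant is bounded below by a positive constant depending only on d; consequently, for any measurable Q ⊂ ℝ^d, p ≥ 1, and u ∈ L^p(Q_h) with Q_h = ∪_{x∈Q} B(x,h(x)), one has ∫_Q |u(x + h(x)y)|^p dx ≤ C ‖u‖^p_{L^p(Q_h)}. -/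
open MeasureTheory
open scoped ENNReal

lemma countable_of_right_gap {S : Set ℝ}
    (h : ∀ s ∈ S, ∃ δ > 0, ∀ t ∈ Set.Ioo s (s + δ), t ∉ S) : S.Countable := by
  choose! δ hδpos hgap using h
  have hq : ∀ s ∈ S, ∃ r : ℚ, s < (r : ℝ) ∧ (r : ℝ) < s + δ s := fun s hs =>
    exists_rat_btwn (by linarith [hδpos s hs])
  choose! q hq1 hq2 using hq
  have hmono : ∀ a ∈ S, ∀ b ∈ S, a < b → (q a : ℝ) < (q b : ℝ) := by
    intro a ha b hb hlt
    have hba : a + δ a ≤ b := by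
      by_contra hc
      push_neg at hc
      exact hgap a ha b ⟨hlt, hc⟩ hb
    exact lt_trans (lt_of_lt_of_le (hq2 a ha) hba) (hq1 b hb)
  have hinj : Set.InjOn q S := by
    intro a ha b hb hab
    rcases lt_trichotomy a b with hlt | heq | hgt
    · exact absurd (congrArg (fun r : ℚ => (r : ℝ)) hab) (ne_of_lt (hmono a ha b hb hlt))
    · exact heq
    · exact absurd (congrArg (fun r : ℚ => (r : ℝ)) hab) (ne_of_gt (hmono b hb a ha hgt))
  exact Set.countable_of_injective_of_countable_image hinj (Set.to_countable _)

lemma det_id_add_smulRight {d : ℕ} (f : EuclideanSpace ℝ (Fin d) →L[ℝ] ℝ)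
    (y : EuclideanSpace ℝ (Fin d)) :
    (ContinuousLinearMap.id ℝ (EuclideanSpace ℝ (Fin d)) + f.smulRight y).det = 1 + f y := by
  classical
  set b := (EuclideanSpace.basisFun (Fin d) ℝ).toBasis with hb
  have hdet : (ContinuousLinearMap.id ℝ (EuclideanSpace ℝ (Fin d)) + f.smulRight y).det
      = LinearMap.det ((ContinuousLinearMap.id ℝ (EuclideanSpace ℝ (Fin d)) + f.smulRight y)
        : EuclideanSpace ℝ (Fin d) →ₗ[ℝ] EuclideanSpace ℝ (Fin d)) := rfl
  rw [hdet, ← LinearMap.det_toMatrix b]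
  have hM : LinearMap.toMatrix b b
      ((ContinuousLinearMap.id ℝ (EuclideanSpace ℝ (Fin d)) + f.smulRight y)
        : EuclideanSpace ℝ (Fin d) →ₗ[ℝ] EuclideanSpace ℝ (Fin d))
      = 1 + Matrix.replicateCol Unit (fun i => y i) *
          Matrix.replicateRow Unit (fun j => f (EuclideanSpace.single j 1)) := by
    ext i j
    rw [LinearMap.toMatrix_apply]
    simp [hb, Matrix.mul_apply, Matrix.one_apply, EuclideanSpace.basisFun_apply,
      Matrix.replicateCol_apply, Matrix.replicateRow_apply, mul_comm]
  rw [hM, Matrix.det_one_add_replicateCol_mul_replicateRow]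
  congr 1
  have hy : y = ∑ i, y i • EuclideanSpace.single i (1:ℝ) := by
    have := (EuclideanSpace.basisFun (Fin d) ℝ).sum_repr y
    simpa [EuclideanSpace.basisFun_repr, EuclideanSpace.basisFun_apply] using this.symm
  conv_rhs => rw [hy]
  rw [map_sum]
  simp [dotProduct, mul_comm]


lemma null_of_right_gap {n : ℕ} {y : EuclideanSpace ℝ (Fin (n + 1))} (hy : ‖y‖ = 1)
    {B : Set (EuclideanSpace ℝ (Fin (n + 1)))} (hB : MeasurableSet B)
    (hgap : ∀ x ∈ B, ∃ δ > 0, ∀ t ∈ Set.Ioo (0 : ℝ) δ, x + t • y ∉ B) :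
    volume B = 0 := by
  classical
  -- an orthonormal basis whose first vector is `y`
  obtain ⟨b, hb0⟩ : ∃ b : OrthonormalBasis (Fin (n + 1)) ℝ (EuclideanSpace ℝ (Fin (n + 1))),
      b 0 = y := by
    have hcard : Module.finrank ℝ (EuclideanSpace ℝ (Fin (n + 1))) = Fintype.card (Fin (n + 1)) := by
      simp
    have horth : Orthonormal ℝ (({0} : Set (Fin (n + 1))).restrict (fun _ => y)) := by
      constructor
      · intro i; simpa [Set.restrict] using hy
      · intro i j hij
        exact absurd (Subtype.ext ((Set.eq_of_mem_singleton i.2).trans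
          (Set.eq_of_mem_singleton j.2).symm)) hij
    obtain ⟨b, hb⟩ := horth.exists_orthonormalBasis_extension_of_card_eq hcard
    exact ⟨b, hb 0 rfl⟩
  set G : EuclideanSpace ℝ (Fin (n + 1)) ≃ᵐ ℝ × (Fin n → ℝ) :=
    (b.measurableEquiv.trans (MeasurableEquiv.toLp 2 (Fin (n + 1) → ℝ)).symm).trans
      (MeasurableEquiv.piFinSuccAbove (fun _ : Fin (n + 1) => ℝ) 0) with hG
  have hGmp : MeasurePreserving G volume volume :=
    ((volume_preserving_piFinSuccAbove (fun _ : Fin (n + 1) => ℝ) 0).comp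
      (EuclideanSpace.volume_preserving_symm_measurableEquiv_toLp (Fin (n + 1)))).comp
      b.measurePreserving_measurableEquiv
  have hGapply : ∀ x, G x = (b.repr x 0, fun i : Fin n => b.repr x ((0 : Fin (n+1)).succAbove i)) := by
    intro x
    rfl
  have hshift : ∀ (x : EuclideanSpace ℝ (Fin (n + 1))) (t : ℝ),
      G (x + t • y) = ((G x).1 + t, (G x).2) := by
    intro x t
    rw [hGapply, hGapply]
    have hrepr : b.repr (x + t • y) = b.repr x + t • EuclideanSpace.single 0 (1 : ℝ) := by
      rw [map_add, _root_.map_smul, ← hb0, b.repr_self]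
    rw [hrepr]
    refine Prod.ext ?_ ?_
    · simp [EuclideanSpace.single_apply]
    · funext i
      simp [Fin.zero_succAbove, EuclideanSpace.single_apply, Fin.succ_ne_zero]
  -- transfer to the product space
  set A : Set (ℝ × (Fin n → ℝ)) := G '' B with hA
  have hAm : MeasurableSet A := G.measurableSet_image.2 hB
  have hBA : volume B = (volume : Measure (ℝ × (Fin n → ℝ))) A := by
    have : B = G ⁻¹' A := (G.toEquiv.preimage_image B).symm
    rw [this]
    exact hGmp.measure_preimage hAm.nullMeasurableSet
  rw [hBA, Measure.volume_eq_prod]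
  set A' : Set ((Fin n → ℝ) × ℝ) := Prod.swap ⁻¹' A with hA'
  have hA'm : MeasurableSet A' := measurable_swap hAm
  have hswap : (volume : Measure ℝ).prod (volume : Measure (Fin n → ℝ)) A
      = (volume : Measure (Fin n → ℝ)).prod (volume : Measure ℝ) A' :=
    (Measure.measurePreserving_swap.measure_preimage hAm.nullMeasurableSet).symm
  rw [hswap]
  rw [Measure.measure_prod_null hA'm]
  refine Filter.Eventually.of_forall fun w => ?_
  have hcount : (Prod.mk w ⁻¹' A').Countable := by
    apply countable_of_right_gap
    intro t ht
    have htA : (t, w) ∈ A := ht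
    have hxB : G.symm (t, w) ∈ B := by
      rcases htA with ⟨x, hxB, hGx⟩
      rwa [← hGx, G.symm_apply_apply]
    obtain ⟨δ, hδ, hgapx⟩ := hgap _ hxB
    refine ⟨δ, hδ, fun t' ht' hmem => ?_⟩
    have hGx : G (G.symm (t, w)) = (t, w) := G.apply_symm_apply _
    have hkey : G (G.symm (t, w) + (t' - t) • y) = (t', w) := by
      rw [hshift, hGx]
      simp
    have hnot : G.symm (t, w) + (t' - t) • y ∉ B :=
      hgapx (t' - t) ⟨by linarith [ht'.1], by linarith [ht'.2]⟩
    apply hnot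
    have : (t', w) ∈ A := hmem
    rcases this with ⟨x', hx'B, hGx'⟩
    have : x' = G.symm (t, w) + (t' - t) • y := by
      apply G.injective
      rw [hkey, hGx']
    rwa [← this]
  simp [hcount.measure_zero]


/-- Variable-radius change of variables estimate: there is `C > 0` depending
only on `d` such that for every differentiable sizing function `h : ℝ^d → (0,∞)` with
`|∇h| ≤ 1/(16√d)`, every `y` with `‖y‖ ≤ 1`, every measurable `Q`, every `p ≥ 1` and every
measurable `u`, `∫_Q |u(x + h(x)y)|^p dx ≤ C ‖u‖_{L^p(Q_h)}^p`, where
`Q_h = ⋃_{x ∈ Q} B(x, h(x))`. -/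
theorem stmt5 {d : ℕ} :
    ∃ C : ℝ, 0 < C ∧
      ∀ h : EuclideanSpace ℝ (Fin d) → ℝ, (∀ x, 0 < h x) → Differentiable ℝ h →
        (∀ x, ‖fderiv ℝ h x‖ ≤ 1 / (16 * Real.sqrt d)) →
        ∀ y : EuclideanSpace ℝ (Fin d), ‖y‖ ≤ 1 →
        ∀ Q : Set (EuclideanSpace ℝ (Fin d)), MeasurableSet Q →
        ∀ p : ℝ, 1 ≤ p →
        ∀ u : EuclideanSpace ℝ (Fin d) → ℝ, Measurable u →
          ∫⁻ x in Q, ENNReal.ofReal (|u (x + h x • y)| ^ p) ≤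
            ENNReal.ofReal C *
              ∫⁻ x in (⋃ z ∈ Q, Metric.ball z (h z)), ENNReal.ofReal (|u x| ^ p) := by
  refine ⟨2, by norm_num, ?_⟩
  intro h hpos hdiff hgrad y hy Q hQ p hp u hu
  set g : EuclideanSpace ℝ (Fin d) → ℝ≥0∞ := fun x => ENNReal.ofReal (|u x| ^ p) with hgdef
  set Qh : Set (EuclideanSpace ℝ (Fin d)) := ⋃ z ∈ Q, Metric.ball z (h z) with hQh
  have hQQh : Q ⊆ Qh := fun x hx =>
    Set.mem_biUnion hx (Metric.mem_ball_self (hpos x))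
  have h2 : (1 : ℝ≥0∞) ≤ ENNReal.ofReal 2 := by
    rw [ENNReal.one_le_ofReal]; norm_num
  by_cases hy0 : y = 0
  · simp only [hy0, smul_zero, add_zero]
    calc ∫⁻ x in Q, g x ≤ ∫⁻ x in Qh, g x := lintegral_mono_set hQQh
      _ ≤ ENNReal.ofReal 2 * ∫⁻ x in Qh, g x := le_mul_of_one_le_left (zero_le) h2
  -- now y ≠ 0, so d ≥ 1
  have hd : d ≠ 0 := by
    rintro rfl
    exact hy0 (Subsingleton.elim _ _)
  -- Lipschitz bound on h
  have hL : ∀ x, ‖fderiv ℝ h x‖ ≤ 1 / 16 := by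
    intro x
    refine (hgrad x).trans ?_
    have h1 : (1 : ℝ) ≤ Real.sqrt d := by
      rw [show (1:ℝ) = Real.sqrt 1 by simp]
      exact Real.sqrt_le_sqrt (by exact_mod_cast Nat.one_le_iff_ne_zero.2 hd)
    rw [div_le_div_iff₀ (by positivity) (by norm_num)]
    nlinarith
  have hlip : ∀ a x : EuclideanSpace ℝ (Fin d), |h a - h x| ≤ (1 / 16) * ‖a - x‖ := by
    intro a x
    have := Convex.norm_image_sub_le_of_norm_fderiv_le
      (fun z _ => hdiff z) (fun z _ => hL z) convex_univ
      (Set.mem_univ x) (Set.mem_univ a)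
    simpa [Real.norm_eq_abs] using this
  -- the map and its derivative
  set Φ : EuclideanSpace ℝ (Fin d) → EuclideanSpace ℝ (Fin d) := fun x => x + h x • y with hΦ
  set A : EuclideanSpace ℝ (Fin d) → EuclideanSpace ℝ (Fin d) →L[ℝ] EuclideanSpace ℝ (Fin d) :=
    fun x => ContinuousLinearMap.id ℝ (EuclideanSpace ℝ (Fin d)) + (fderiv ℝ h x).smulRight y
    with hA
  have hderiv : ∀ x, HasFDerivAt Φ (A x) x := fun x =>
    (hasFDerivAt_id x).add ((hdiff x).hasFDerivAt.smul_const y)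
  have habs : ∀ x, |fderiv ℝ h x y| ≤ 1 / 16 := by
    intro x
    calc |fderiv ℝ h x y| ≤ ‖fderiv ℝ h x‖ * ‖y‖ := (fderiv ℝ h x).le_opNorm y
      _ ≤ (1 / 16) * 1 := by
          apply mul_le_mul (hL x) hy (norm_nonneg y) (by norm_num)
      _ = 1 / 16 := by norm_num
  have hdetlb : ∀ x, (15 : ℝ) / 16 ≤ |(A x).det| := by
    intro x
    rw [hA]; rw [det_id_add_smulRight]
    have := habs x
    rw [abs_le] at this
    rw [abs_of_pos (by linarith)]
    linarith
  have hdetub : ∀ x, |(A x).det| ≤ 17 / 16 := by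
    intro x
    rw [hA]; rw [det_id_add_smulRight]
    have := habs x
    rw [abs_le] at this
    rw [abs_of_pos (by linarith)]
    linarith
  have hinj : Function.Injective Φ := by
    intro a x hax
    have hdiffeq : a - x = (h x - h a) • y := by
      have hax' : a + h a • y = x + h x • y := hax
      rw [sub_smul, sub_eq_sub_iff_add_eq_add, hax']
      exact add_comm _ _
    by_contra hne
    have hpos' : 0 < ‖a - x‖ := by
      rw [norm_pos_iff, sub_ne_zero]; exact hne
    have : ‖a - x‖ ≤ (1/16) * ‖a - x‖ := by
      calc ‖a - x‖ = ‖(h x - h a) • y‖ := by rw [hdiffeq]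
        _ = |h x - h a| * ‖y‖ := by rw [norm_smul, Real.norm_eq_abs]
        _ ≤ ((1/16) * ‖x - a‖) * 1 := by
            apply mul_le_mul (hlip x a) hy (norm_nonneg y) (by positivity)
        _ = (1/16) * ‖a - x‖ := by rw [norm_sub_rev]; ring
    linarith
  -- the bad set is null
  set B : Set (EuclideanSpace ℝ (Fin d)) := Q \ Φ ⁻¹' Qh with hB
  have hQhopen : IsOpen Qh := isOpen_biUnion fun z _ => Metric.isOpen_ball
  have hΦcont : Continuous Φ := by
    apply continuous_id.add
    exact (hdiff.continuous).smul continuous_const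
  have hBmeas : MeasurableSet B := hQ.diff (hQhopen.measurableSet.preimage hΦcont.measurable)
  have hgapB : ∀ x ∈ B, ∀ s ∈ Set.Ioo (0:ℝ) (h x), x + s • y ∉ B := by
    intro x hx s hs hx'
    have hx'Q : x + s • y ∈ Q := hx'.1
    apply hx.2
    show Φ x ∈ Qh
    apply Set.mem_biUnion hx'Q
    rw [Metric.mem_ball, dist_eq_norm]
    have heq : Φ x - (x + s • y) = (h x - s) • y := by
      rw [hΦ]; rw [sub_smul]; beta_reduce; abel
    rw [heq, norm_smul, Real.norm_eq_abs, abs_of_pos (by linarith [hs.2])]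
    have hb1 : (h x - s) * ‖y‖ ≤ h x - s := by
      nlinarith [hs.2, norm_nonneg y]
    have hb2 : |h (x + s • y) - h x| ≤ (1/16) * (s * ‖y‖) := by
      have := hlip (x + s • y) x
      simpa [norm_smul, Real.norm_eq_abs, abs_of_pos hs.1] using this
    rw [abs_le] at hb2
    have hyn : s * ‖y‖ ≤ s := by nlinarith [hs.1, norm_nonneg y]
    have : h x - (1/16) * s ≤ h (x + s • y) := by nlinarith [hs.1]
    nlinarith [hs.1, hs.2]
  have hBnull : volume B = 0 := by
    obtain ⟨n, rfl⟩ := Nat.exists_eq_succ_of_ne_zero hd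
    have hyunit : ‖(‖y‖⁻¹ • y : EuclideanSpace ℝ (Fin (n+1)))‖ = 1 := norm_smul_inv_norm hy0
    apply null_of_right_gap hyunit hBmeas
    intro x hx
    have hyn : (0:ℝ) < ‖y‖ := norm_pos_iff.2 hy0
    refine ⟨h x * ‖y‖, mul_pos (hpos x) hyn, ?_⟩
    intro t ht
    have : x + t • ‖y‖⁻¹ • y = x + (t * ‖y‖⁻¹) • y := by rw [smul_smul]
    rw [this]
    apply hgapB x hx
    constructor
    · exact mul_pos ht.1 (inv_pos.2 hyn)
    · calc t * ‖y‖⁻¹ < (h x * ‖y‖) * ‖y‖⁻¹ :=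
            mul_lt_mul_of_pos_right ht.2 (inv_pos.2 hyn)
        _ = h x := by field_simp
  -- change of variables
  have hcov := lintegral_image_eq_lintegral_abs_det_fderiv_mul volume hQ
    (fun x _ => (hderiv x).hasFDerivWithinAt) (hinj.injOn) g
  have himageB := lintegral_abs_det_fderiv_eq_addHaar_image volume hBmeas
    (fun x _ => (hderiv x).hasFDerivWithinAt) (hinj.injOn)
  have hΦBnull : volume (Φ '' B) = 0 := by
    rw [← himageB]
    have : ∫⁻ x in B, ENNReal.ofReal |(A x).det| ∂volume
        ≤ ∫⁻ _ in B, ENNReal.ofReal (17/16) ∂volume :=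
      lintegral_mono fun x => ENNReal.ofReal_le_ofReal (hdetub x)
    rw [setLIntegral_const, hBnull, mul_zero] at this
    exact le_antisymm this (zero_le)
  have himgsub : Φ '' Q ⊆ Qh ∪ Φ '' B := by
    rintro _ ⟨x, hxQ, rfl⟩
    by_cases hmem : x ∈ Φ ⁻¹' Qh
    · exact Or.inl hmem
    · exact Or.inr ⟨x, ⟨hxQ, hmem⟩, rfl⟩
  have step1 : ∫⁻ x in Q, g (Φ x) ≤ 2 * ∫⁻ x in Q, ENNReal.ofReal |(A x).det| * g (Φ x) := by
    rw [← lintegral_const_mul' 2 _ (by norm_num)]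
    apply lintegral_mono
    intro x
    have h1 : (1 : ℝ≥0∞) ≤ 2 * ENNReal.ofReal |(A x).det| := by
      calc (1 : ℝ≥0∞) ≤ ENNReal.ofReal (2 * (15/16)) := by
            rw [ENNReal.one_le_ofReal]; norm_num
        _ = ENNReal.ofReal 2 * ENNReal.ofReal (15/16) := by
            rw [ENNReal.ofReal_mul]; norm_num
        _ ≤ 2 * ENNReal.ofReal |(A x).det| := by
            apply mul_le_mul'
            · simp [ENNReal.ofReal_ofNat]
            · exact ENNReal.ofReal_le_ofReal (hdetlb x)
    calc g (Φ x) = 1 * g (Φ x) := (one_mul _).symm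
      _ ≤ (2 * ENNReal.ofReal |(A x).det|) * g (Φ x) := mul_le_mul_left h1 _
      _ = 2 * (ENNReal.ofReal |(A x).det| * g (Φ x)) := by ring
  have step2 : ∫⁻ x in Φ '' Q, g x ≤ ∫⁻ x in Qh, g x := by
    calc ∫⁻ x in Φ '' Q, g x ≤ ∫⁻ x in Qh ∪ Φ '' B, g x := lintegral_mono_set himgsub
      _ ≤ (∫⁻ x in Qh, g x) + ∫⁻ x in Φ '' B, g x := lintegral_union_le _ _ _
      _ = ∫⁻ x in Qh, g x := by
          rw [setLIntegral_measure_zero _ _ hΦBnull, add_zero]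
  calc ∫⁻ x in Q, ENNReal.ofReal (|u (x + h x • y)| ^ p)
      = ∫⁻ x in Q, g (Φ x) := rfl
    _ ≤ 2 * ∫⁻ x in Q, ENNReal.ofReal |(A x).det| * g (Φ x) := step1
    _ = 2 * ∫⁻ x in Φ '' Q, g x := by rw [hcov]
    _ ≤ 2 * ∫⁻ x in Qh, g x := mul_le_mul_right step2 _
    _ = ENNReal.ofReal 2 * ∫⁻ x in Qh, g x := by
        congr 1
        simp [ENNReal.ofReal_ofNat]
end

section
/- Let h: ℝ^d → (0,∞) satisfy |∇h| ≤ 1/(16√d) and let 𝒬 be the set of cubes produced by the quadtree-style Algorithm (repeatedly splitting any cube Q_i with size(Q_i) > 8 max_{x∈Q_i} h(x) into 2^d half-size children, keeping those that intersect Ω, starting from a cube of size > 4 max_Ω h). Then any two intersecting cubes Q_i, Q_j ∈ 𝒬 satisfy size(Q_i) ≤ 2 size(Q_j) (2:1 balance). -/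
open MeasureTheory

/-- An axis-aligned cube in `ℝ^d`, given by its center and its side length (its size). -/
structure Cube (d : ℕ) where
  center : EuclideanSpace ℝ (Fin d)
  size : ℝ

/-- The set of points of a cube. -/
def Cube.toSet {d : ℕ} (Q : Cube d) : Set (EuclideanSpace ℝ (Fin d)) :=
  {x | ∀ i, |x i - Q.center i| ≤ Q.size / 2}

lemma euclid_norm_le {d : ℕ} (v : EuclideanSpace ℝ (Fin d)) (s : ℝ) (hs : 0 ≤ s)
    (hb : ∀ i, |v i| ≤ s) : ‖v‖ ≤ Real.sqrt d * s := by
  rw [EuclideanSpace.norm_eq]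
  simp only [Real.norm_eq_abs]
  have : ∑ i, |v i| ^ 2 ≤ ∑ _i : Fin d, s ^ 2 := by
    apply Finset.sum_le_sum
    intro i _
    have := hb i
    nlinarith [abs_nonneg (v i)]
  calc Real.sqrt (∑ i, |v i| ^ 2) ≤ Real.sqrt (∑ _i : Fin d, s ^ 2) := Real.sqrt_le_sqrt this
    _ = Real.sqrt (d * s ^ 2) := by rw [Finset.sum_const, Finset.card_univ, Fintype.card_fin,
        nsmul_eq_mul]
    _ = Real.sqrt d * s := by
        rw [Real.sqrt_mul (Nat.cast_nonneg d), Real.sqrt_sq hs]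

lemma lip_bound {d : ℕ} (h : EuclideanSpace ℝ (Fin d) → ℝ)
    (hdiff : Differentiable ℝ h)
    (hgrad : ∀ x, ‖fderiv ℝ h x‖ ≤ 1 / (16 * Real.sqrt d))
    (Q : Cube d) (hQ : 0 < Q.size) (x y : EuclideanSpace ℝ (Fin d))
    (hx : x ∈ Q.toSet) (hy : y ∈ Q.toSet) : h y ≤ h x + Q.size / 16 := by
  rcases Nat.eq_zero_or_pos d with hd | hd
  · subst hd
    have : y = x := Subsingleton.elim y x
    subst this
    linarith
  · have hsd : 0 < Real.sqrt d := Real.sqrt_pos.mpr (by exact_mod_cast hd)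
    have key : ‖h y - h x‖ ≤ (1 / (16 * Real.sqrt d)) * ‖y - x‖ := by
      apply Convex.norm_image_sub_le_of_norm_fderiv_le
        (fun z _ => hdiff z) (fun z _ => hgrad z) convex_univ (Set.mem_univ x) (Set.mem_univ y)
    have hnorm : ‖y - x‖ ≤ Real.sqrt d * Q.size := by
      apply euclid_norm_le _ _ hQ.le
      intro i
      have h1 := hx i
      have h2 := hy i
      have hyx : (y - x) i = (y i - Q.center i) - (x i - Q.center i) := by
        show y i - x i = _; ring
      rw [hyx]
      calc |(y i - Q.center i) - (x i - Q.center i)| ≤ |y i - Q.center i| + |x i - Q.center i| :=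
            abs_sub _ _
        _ ≤ Q.size / 2 + Q.size / 2 := add_le_add h2 h1
        _ = Q.size := by ring
    have : h y - h x ≤ (1 / (16 * Real.sqrt d)) * (Real.sqrt d * Q.size) := by
      calc h y - h x ≤ ‖h y - h x‖ := le_abs_self _
        _ ≤ (1 / (16 * Real.sqrt d)) * ‖y - x‖ := key
        _ ≤ (1 / (16 * Real.sqrt d)) * (Real.sqrt d * Q.size) := by
            apply mul_le_mul_of_nonneg_left hnorm
            positivity
    have heq : (1 / (16 * Real.sqrt d)) * (Real.sqrt d * Q.size) = Q.size / 16 := by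
      field_simp
    linarith [heq ▸ this]

/-- **2:1 balance.** Let `h : ℝ^d → (0,∞)` satisfy `|∇h| ≤ 1/(16√d)` and let `𝒬`
be the set of cubes produced by the quadtree-style algorithm.  The algorithm output is
characterized by: all cubes are dyadic descendants of a common root (any two sizes differ by a
power of two), every cube `Q ∈ 𝒬` arose from splitting its parent (or the root condition), so
`h(x) < size(Q)/4` on `Q`, and no cube of `𝒬` is itself eligible for splitting, so
`size(Q) ≤ 8 max_{x ∈ Q} h(x)`.  Then any two intersecting cubes `Q, Q' ∈ 𝒬` satisfy
`size(Q) ≤ 2 size(Q')`. -/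
theorem stmt6 {d : ℕ} (h : EuclideanSpace ℝ (Fin d) → ℝ)
    (hpos : ∀ x, 0 < h x) (hdiff : Differentiable ℝ h)
    (hgrad : ∀ x, ‖fderiv ℝ h x‖ ≤ 1 / (16 * Real.sqrt d))
    (𝒬 : Set (Cube d))
    (hsize : ∀ Q ∈ 𝒬, 0 < Q.size)
    (hdyadic : ∀ Q ∈ 𝒬, ∀ Q' ∈ 𝒬, ∃ m : ℤ, Q.size = 2 ^ m * Q'.size)
    (hparent_split : ∀ Q ∈ 𝒬, ∀ x ∈ Q.toSet, 4 * h x < Q.size)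
    (hnot_split : ∀ Q ∈ 𝒬, ∃ x ∈ Q.toSet, Q.size ≤ 8 * h x) :
    ∀ Q ∈ 𝒬, ∀ Q' ∈ 𝒬, (Q.toSet ∩ Q'.toSet).Nonempty → Q.size ≤ 2 * Q'.size := by
  intro Q hQ Q' hQ' ⟨x, hxQ, hxQ'⟩
  by_contra hcon
  push_neg at hcon
  obtain ⟨m, hm⟩ := hdyadic Q hQ Q' hQ'
  have hQs := hsize Q hQ
  have hQ's := hsize Q' hQ'
  -- 2^m > 2, so m ≥ 2, so 2^m ≥ 4
  have h2m : (2 : ℝ) ^ (1 : ℤ) < 2 ^ m := by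
    rw [zpow_one]
    by_contra hle
    push_neg at hle
    have : Q.size ≤ 2 * Q'.size := by
      rw [hm]
      exact mul_le_mul_of_nonneg_right hle hQ's.le
    linarith
  have hm2 : (2 : ℤ) ≤ m := by
    have := (zpow_lt_zpow_iff_right₀ (by norm_num : (1:ℝ) < 2)).mp h2m
    omega
  have h4 : (4 : ℝ) ≤ 2 ^ m := by
    calc (4 : ℝ) = 2 ^ (2 : ℤ) := by norm_num
      _ ≤ 2 ^ m := zpow_le_zpow_right₀ (by norm_num) hm2
  have hquarter : 4 * Q'.size ≤ Q.size := by
    rw [hm]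
    nlinarith
  -- h x < Q'.size / 4 ≤ Q.size / 16
  have hx16 : h x < Q.size / 16 := by
    have := hparent_split Q' hQ' x hxQ'
    linarith
  obtain ⟨y, hyQ, hy⟩ := hnot_split Q hQ
  have := lip_bound h hdiff hgrad Q hQs x y hxQ hyQ
  linarith
end

section
/- Let h: ℝ^d → (0,∞) satisfy |∇h| ≤ 1/(16√d), and let 𝒬 be the output of the dyadic cube-splitting algorithm (split Q whenever size(Q) > 8 max_{x∈Q} h(x)). Then every cube Q ∈ 𝒬 satisfies 4 h(x) ≤ size(Q) ≤ 16 h(x) for all x ∈ Q. -/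
open MeasureTheory

/-- Let `h : ℝ^d → (0,∞)` satisfy `|∇h| ≤ 1/(16√d)`, and let `𝒬` be the output
of the dyadic cube-splitting algorithm.  The output is characterized by: every cube `Q ∈ 𝒬`
arose from splitting its parent `Q̂` (or the root condition), so `2 size(Q) = size(Q̂) >
8 max_{Q̂} h ≥ 8 h(x)` for `x ∈ Q`; and `Q` itself is not split, so some `x ∈ Q` has
`size(Q) ≤ 8 h(x)`.  Then every `Q ∈ 𝒬` satisfies `4 h(x) ≤ size(Q) ≤ 16 h(x)` for all
`x ∈ Q`. -/
theorem stmt7 {d : ℕ} (h : EuclideanSpace ℝ (Fin d) → ℝ)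
    (hpos : ∀ x, 0 < h x) (hdiff : Differentiable ℝ h)
    (hgrad : ∀ x, ‖fderiv ℝ h x‖ ≤ 1 / (16 * Real.sqrt d))
    (𝒬 : Set (Cube d))
    (hsize : ∀ Q ∈ 𝒬, 0 < Q.size)
    (hparent_split : ∀ Q ∈ 𝒬, ∀ x ∈ Q.toSet, 8 * h x < 2 * Q.size)
    (hnot_split : ∀ Q ∈ 𝒬, ∃ x ∈ Q.toSet, Q.size ≤ 8 * h x) :
    ∀ Q ∈ 𝒬, ∀ x ∈ Q.toSet, 4 * h x ≤ Q.size ∧ Q.size ≤ 16 * h x := by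
  intro Q hQ x hx
  have hupper := hparent_split Q hQ x hx
  refine ⟨by linarith, ?_⟩
  obtain ⟨y, hy, hy8⟩ := hnot_split Q hQ
  -- bound the distance between x and y
  have hnn : (0:ℝ) ≤ Q.size := le_of_lt (hsize Q hQ)
  have hdist : ‖x - y‖ ≤ Real.sqrt d * Q.size := by
    have hsum : ∑ i, ‖(x - y) i‖ ^ 2 ≤ (d : ℝ) * Q.size ^ 2 := by
      have hstep : ∀ i, ‖(x - y) i‖ ^ 2 ≤ Q.size ^ 2 := by
        intro i
        have h1 := hx i
        have h2 := hy i
        have hco : (x - y) i = x i - y i := rfl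
        rw [hco, Real.norm_eq_abs]
        have habs : |x i - y i| ≤ Q.size := by
          calc |x i - y i| = |(x i - Q.center i) - (y i - Q.center i)| := by ring_nf
            _ ≤ |x i - Q.center i| + |y i - Q.center i| := abs_sub _ _
            _ ≤ Q.size := by linarith
        have := abs_le.mp habs
        rw [sq_abs]
        nlinarith
      calc ∑ i, ‖(x - y) i‖ ^ 2 ≤ ∑ _i : Fin d, Q.size ^ 2 :=
            Finset.sum_le_sum (fun i _ => hstep i)
        _ = (d : ℝ) * Q.size ^ 2 := by simp [Finset.sum_const, nsmul_eq_mul]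
    have hsq : ‖x - y‖ ≤ Real.sqrt ((d : ℝ) * Q.size ^ 2) := by
      rw [EuclideanSpace.norm_eq]
      exact Real.sqrt_le_sqrt hsum
    calc ‖x - y‖ ≤ Real.sqrt ((d : ℝ) * Q.size ^ 2) := hsq
      _ = Real.sqrt d * Q.size := by
          rw [Real.sqrt_mul (Nat.cast_nonneg d), Real.sqrt_sq hnn]
  -- mean value inequality
  have hmv : ‖h x - h y‖ ≤ (1 / (16 * Real.sqrt d)) * ‖x - y‖ := by
    have := Convex.norm_image_sub_le_of_norm_fderiv_le
      (fun z _ => hdiff z)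
      (fun z _ => hgrad z) convex_univ (Set.mem_univ y) (Set.mem_univ x)
    exact this
  have hbound : |h x - h y| ≤ Q.size / 16 := by
    rcases Nat.eq_zero_or_pos d with hd | hd
    · subst hd
      have : ‖x - y‖ = 0 := by
        rw [EuclideanSpace.norm_eq]; simp
      rw [Real.norm_eq_abs] at hmv
      have : (1 / (16 * Real.sqrt 0)) * ‖x - y‖ = 0 := by simp [this]
      have hQs := hsize Q hQ
      nlinarith [hmv, this]
    · have hsd : 0 < Real.sqrt d := Real.sqrt_pos.mpr (by exact_mod_cast hd)
      rw [Real.norm_eq_abs] at hmv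
      calc |h x - h y| ≤ (1 / (16 * Real.sqrt d)) * ‖x - y‖ := hmv
        _ ≤ (1 / (16 * Real.sqrt d)) * (Real.sqrt d * Q.size) := by
            apply mul_le_mul_of_nonneg_left hdist
            positivity
        _ = Q.size / 16 := by field_simp
  have := abs_le.mp hbound
  linarith
end

section
/- Let K be a simplex in ℝ^d with unit edge-direction vectors {u_i}, and define the coplanarity θ_K = max_{|ξ|=1} min_i arccos(ξ · u_i). For a triangle in ℝ^2, θ_K equals half of the largest angle of the triangle. -/
open Real
open scoped RealInnerProductSpace

noncomputable def gg (x : ℝ) : ℝ := Real.arccos |Real.cos x|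

lemma gg_even (x : ℝ) : gg (-x) = gg x := by simp [gg]

lemma gg_periodic : Function.Periodic gg π := by
  intro x; simp [gg, Real.cos_add_pi, abs_neg]

lemma gg_int (x : ℝ) (k : ℤ) : gg (x + k * π) = gg x := by
  simpa using (gg_periodic.int_mul k) x

lemma gg_eq_self {x : ℝ} (h0 : 0 ≤ x) (h1 : x ≤ π / 2) : gg x = x := by
  have hcos : 0 ≤ Real.cos x := Real.cos_nonneg_of_mem_Icc ⟨by linarith, h1⟩
  rw [gg, abs_of_nonneg hcos, Real.arccos_cos h0 (by linarith [Real.pi_pos])]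

lemma gg_eq_abs {x : ℝ} (h : |x| ≤ π / 2) : gg x = |x| := by
  rcases le_or_gt 0 x with hx | hx
  · rw [abs_of_nonneg hx] at h ⊢; exact gg_eq_self hx h
  · rw [abs_of_neg hx] at h ⊢
    rw [← gg_even x]
    exact gg_eq_self (by linarith) h

lemma gg_ge {d x : ℝ} (hd0 : 0 ≤ d) (h1 : d ≤ x) (h2 : x ≤ π - d) : d ≤ gg x := by
  have hπ := Real.pi_pos
  have hd : d ≤ π / 2 := by linarith
  have hxπ : x ≤ π := by linarith
  have h3 : |Real.cos x| ≤ Real.cos d := by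
    rw [abs_le]
    constructor
    · have : Real.cos (π - x) ≤ Real.cos d :=
        Real.cos_le_cos_of_nonneg_of_le_pi hd0 (by linarith) (by linarith)
      rw [Real.cos_pi_sub] at this; linarith
    · exact Real.cos_le_cos_of_nonneg_of_le_pi hd0 hxπ h1
  have h4 : Real.arccos (Real.cos d) ≤ Real.arccos |Real.cos x| := by
    apply Real.strictAntiOn_arccos.antitoneOn
    · exact ⟨by linarith [abs_nonneg (Real.cos x)], Real.abs_cos_le_one x⟩
    · exact ⟨by linarith [Real.neg_one_le_cos d], Real.cos_le_one d⟩
    · exact h3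
  rwa [Real.arccos_cos hd0 (by linarith)] at h4

lemma no_int_pi {x : ℝ} (k : ℤ) (h0 : 0 < x) (h1 : x < π) (h : x = k * π) : False := by
  have hπ := Real.pi_pos
  rcases le_or_gt k 0 with hk | hk
  · have : (k : ℝ) ≤ 0 := by exact_mod_cast hk
    nlinarith
  · have : (1 : ℝ) ≤ (k : ℝ) := by exact_mod_cast hk
    nlinarith

lemma cos_rigid {α β γ x2 x3 : ℝ} (hα0 : 0 < α) (hβ0 : 0 < β) (hγ0 : 0 < γ)
    (hsum : α + β + γ = π)
    (h2 : Real.cos x2 = Real.cos α) (h3 : Real.cos x3 = Real.cos (α + γ))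
    (h23 : Real.cos (x3 - x2) = Real.cos γ) :
    ((∃ k : ℤ, x2 = 2 * k * π + α) ∧ ∃ m : ℤ, x3 = 2 * m * π + (α + γ)) ∨
    ((∃ k : ℤ, x2 = 2 * k * π - α) ∧ ∃ m : ℤ, x3 = 2 * m * π - (α + γ)) := by
  have hαπ : α < π := by linarith
  have hαγ : α + γ < π := by linarith
  obtain ⟨k, hk⟩ := Real.cos_eq_cos_iff.1 h2.symm
  obtain ⟨m, hm⟩ := Real.cos_eq_cos_iff.1 h3.symm
  obtain ⟨j, hj⟩ := Real.cos_eq_cos_iff.1 h23.symm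
  rcases hk with hk | hk <;> rcases hm with hm | hm
  · left; exact ⟨⟨k, hk⟩, ⟨m, hm⟩⟩
  · exfalso
    rcases hj with hj | hj
    · refine no_int_pi (m - k - j) (by linarith : (0:ℝ) < α + γ) hαγ ?_
      push_cast; linarith
    · refine no_int_pi (m - k - j) hα0 hαπ ?_
      push_cast; linarith
  · exfalso
    rcases hj with hj | hj
    · refine no_int_pi (j - m + k) hα0 hαπ ?_
      push_cast; linarith
    · refine no_int_pi (j - m + k) (by linarith : (0:ℝ) < α + γ) hαγ ?_
      push_cast; linarith
  · right; exact ⟨⟨k, hk⟩, ⟨m, hm⟩⟩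

lemma upper_core {α β γ : ℝ} (hα0 : 0 < α) (hβ0 : 0 < β) (hγ0 : 0 < γ)
    (hsum : α + β + γ = π) (s : ℝ) :
    gg s ≤ max α (max β γ) / 2 ∨ gg (s - α) ≤ max α (max β γ) / 2 ∨
      gg (s - α - γ) ≤ max α (max β γ) / 2 := by
  have hπ := Real.pi_pos
  have hαD : α ≤ max α (max β γ) := le_max_left _ _
  have hβD : β ≤ max α (max β γ) := le_trans (le_max_left _ _) (le_max_right _ _)
  have hγD : γ ≤ max α (max β γ) := le_trans (le_max_right _ _) (le_max_right _ _)
  set s' := s - ⌊s / π⌋ * π with hs'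
  have hs'0 : 0 ≤ s' := by
    have := Int.sub_floor_div_mul_nonneg s hπ
    simpa [hs'] using this
  have hs'1 : s' < π := by
    have := Int.sub_floor_div_mul_lt s hπ
    simpa [hs'] using this
  have e1 : gg s = gg s' := by
    rw [hs', show s - ⌊s / π⌋ * π = s + ((-⌊s / π⌋ : ℤ) : ℝ) * π by push_cast; ring, gg_int]
  have e2 : gg (s - α) = gg (s' - α) := by
    rw [hs', show s - ⌊s / π⌋ * π - α = s - α + ((-⌊s / π⌋ : ℤ) : ℝ) * π by push_cast; ring,
      gg_int]
  have e3 : gg (s - α - γ) = gg (s' - α - γ) := by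
    rw [hs',
      show s - ⌊s / π⌋ * π - α - γ = s - α - γ + ((-⌊s / π⌋ : ℤ) : ℝ) * π by push_cast; ring,
      gg_int]
  rcases le_or_gt s' α with h1 | h1
  · rcases le_or_gt s' (α / 2) with h2 | h2
    · left
      rw [e1, gg_eq_abs (by rw [abs_of_nonneg hs'0]; linarith), abs_of_nonneg hs'0]
      linarith
    · right; left
      rw [e2, gg_eq_abs (by rw [abs_of_nonpos (by linarith)]; linarith),
        abs_of_nonpos (by linarith)]
      linarith
  · rcases le_or_gt s' (α + γ) with h2 | h2
    · rcases le_or_gt s' (α + γ / 2) with h3 | h3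
      · right; left
        rw [e2, gg_eq_abs (by rw [abs_of_nonneg (by linarith)]; linarith),
          abs_of_nonneg (by linarith)]
        linarith
      · right; right
        rw [e3, gg_eq_abs (by rw [abs_of_nonpos (by linarith)]; linarith),
          abs_of_nonpos (by linarith)]
        linarith
    · rcases le_or_gt s' (α + γ + β / 2) with h3 | h3
      · right; right
        rw [e3, gg_eq_abs (by rw [abs_of_nonneg (by linarith)]; linarith),
          abs_of_nonneg (by linarith)]
        linarith
      · left
        have e4 : gg s' = gg (s' - π) := by
          rw [show s' - π = s' + ((-1 : ℤ) : ℝ) * π by push_cast; ring, gg_int]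
        rw [e1, e4, gg_eq_abs (by rw [abs_of_nonpos (by linarith)]; linarith),
          abs_of_nonpos (by linarith)]
        linarith

lemma exists_core {α β γ : ℝ} (hα0 : 0 < α) (hβ0 : 0 < β) (hγ0 : 0 < γ)
    (hsum : α + β + γ = π) :
    ∃ s : ℝ, max α (max β γ) / 2 ≤ gg s ∧ max α (max β γ) / 2 ≤ gg (s - α) ∧
      max α (max β γ) / 2 ≤ gg (s - α - γ) := by
  have hπ := Real.pi_pos
  rcases max_cases α (max β γ) with ⟨hM, h1⟩ | ⟨hM, h1⟩
  · -- α is max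
    refine ⟨α / 2, ?_, ?_, ?_⟩
    · rw [hM, gg_eq_self (by linarith) (by linarith)]
    · rw [hM, show α / 2 - α = -(α / 2) by ring, gg_even,
        gg_eq_self (by linarith) (by linarith)]
    · rw [hM, show α / 2 - α - γ = -(α / 2 + γ) by ring, gg_even]
      exact gg_ge (by linarith) (by linarith) (by linarith)
  · rcases max_cases β γ with ⟨hM2, h2⟩ | ⟨hM2, h2⟩
    · -- β is max
      have hMv : max α (max β γ) = β := by rw [hM, hM2]
      rw [hM2] at h1
      refine ⟨α + γ + β / 2, ?_, ?_, ?_⟩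
      · rw [hMv, show α + γ + β / 2 = -(β / 2) + ((1 : ℤ) : ℝ) * π by push_cast; linarith,
          gg_int, gg_even, gg_eq_self (by linarith) (by linarith)]
      · rw [hMv, show α + γ + β / 2 - α = γ + β / 2 by ring]
        exact gg_ge (by linarith) (by linarith) (by linarith)
      · rw [hMv, show α + γ + β / 2 - α - γ = β / 2 by ring,
          gg_eq_self (by linarith) (by linarith)]
    · -- γ is max
      have hMv : max α (max β γ) = γ := by rw [hM, hM2]
      rw [hM2] at h1
      refine ⟨α + γ / 2, ?_, ?_, ?_⟩
      · rw [hMv]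
        exact gg_ge (by linarith) (by linarith) (by linarith)
      · rw [hMv, show α + γ / 2 - α = γ / 2 by ring,
          gg_eq_self (by linarith) (by linarith)]
      · rw [hMv, show α + γ / 2 - α - γ = -(γ / 2) by ring, gg_even,
          gg_eq_self (by linarith) (by linarith)]


lemma coord_sq_norm (x : EuclideanSpace ℝ (Fin 2)) : x 0 ^ 2 + x 1 ^ 2 = ‖x‖ ^ 2 := by
  have h := real_inner_self_eq_norm_sq x
  rw [← h, PiLp.inner_apply, Fin.sum_univ_two]
  simp [RCLike.inner_apply]

lemma polar (x : EuclideanSpace ℝ (Fin 2)) (hx : x ≠ 0) :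
    ∃ θ : ℝ, x 0 = ‖x‖ * Real.cos θ ∧ x 1 = ‖x‖ * Real.sin θ := by
  have hnx : ‖x‖ ≠ 0 := norm_ne_zero_iff.2 hx
  set z : ℂ := ⟨x 0, x 1⟩ with hz
  have hz0 : z ≠ 0 := by
    intro h
    apply hx
    have h0 : x 0 = 0 := congrArg Complex.re h
    have h1 : x 1 = 0 := congrArg Complex.im h
    ext i
    fin_cases i <;> simpa [h0, h1]
  have habs : ‖z‖ = ‖x‖ := by
    rw [Complex.norm_def, Complex.normSq_mk]
    rw [show x 0 * x 0 + x 1 * x 1 = ‖x‖ ^ 2 by rw [← coord_sq_norm]; ring]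
    exact Real.sqrt_sq (norm_nonneg x)
  refine ⟨Complex.arg z, ?_, ?_⟩
  · rw [Complex.cos_arg hz0, habs]
    field_simp
    rfl
  · rw [Complex.sin_arg, habs]
    field_simp
    rfl

lemma inner_polar (x y : EuclideanSpace ℝ (Fin 2)) (θ φ : ℝ)
    (hx0 : x 0 = ‖x‖ * Real.cos θ) (hx1 : x 1 = ‖x‖ * Real.sin θ)
    (hy0 : y 0 = ‖y‖ * Real.cos φ) (hy1 : y 1 = ‖y‖ * Real.sin φ) :
    ⟪x, y⟫ = ‖x‖ * ‖y‖ * Real.cos (θ - φ) := by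
  rw [PiLp.inner_apply, Fin.sum_univ_two]
  simp only [RCLike.inner_apply, conj_trivial]
  rw [hx0, hx1, hy0, hy1, Real.cos_sub]
  ring


/-- For a nondegenerate triangle `K` in `ℝ²` with vertices `v 0, v 1, v 2`,
the coplanarity `θ_K = max_{|ξ|=1} min_i arccos(|ξ · u_i|)` (the `u_i` being unit vectors
parallel to the edges) equals half of the largest angle of the triangle. -/
theorem stmt9 (v : Fin 3 → EuclideanSpace ℝ (Fin 2)) (hv : AffineIndependent ℝ v) :
    sSup {t : ℝ | ∃ ξ : EuclideanSpace ℝ (Fin 2), ‖ξ‖ = 1 ∧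
        ∀ i j, i ≠ j → t ≤ Real.arccos (abs ⟪ξ, v j - v i⟫ / dist (v i) (v j))} =
      (max (EuclideanGeometry.angle (v 1) (v 0) (v 2))
        (max (EuclideanGeometry.angle (v 0) (v 1) (v 2))
          (EuclideanGeometry.angle (v 0) (v 2) (v 1)))) / 2 := by
  have hπ := Real.pi_pos
  -- distinct vertices
  have h01 : v 0 ≠ v 1 := hv.injective.ne (by decide)
  have h02 : v 0 ≠ v 2 := hv.injective.ne (by decide)
  have h12 : v 1 ≠ v 2 := hv.injective.ne (by decide)
  -- angles
  set A := EuclideanGeometry.angle (v 1) (v 0) (v 2) with hA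
  set B := EuclideanGeometry.angle (v 0) (v 1) (v 2) with hB
  set C := EuclideanGeometry.angle (v 0) (v 2) (v 1) with hC
  have hA0 : 0 < A := EuclideanGeometry.angle_pos_of_not_collinear
    ((affineIndependent_iff_not_collinear_of_ne (by decide : (1 : Fin 3) ≠ 0)
      (by decide : (1 : Fin 3) ≠ 2) (by decide : (0 : Fin 3) ≠ 2)).1 hv)
  have hB0 : 0 < B := EuclideanGeometry.angle_pos_of_not_collinear
    ((affineIndependent_iff_not_collinear_of_ne (by decide : (0 : Fin 3) ≠ 1)
      (by decide : (0 : Fin 3) ≠ 2) (by decide : (1 : Fin 3) ≠ 2)).1 hv)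
  have hC0 : 0 < C := EuclideanGeometry.angle_pos_of_not_collinear
    ((affineIndependent_iff_not_collinear_of_ne (by decide : (0 : Fin 3) ≠ 2)
      (by decide : (0 : Fin 3) ≠ 1) (by decide : (2 : Fin 3) ≠ 1)).1 hv)
  have hsum : A + B + C = π := by
    have h := EuclideanGeometry.angle_add_angle_add_angle_eq_pi (V := EuclideanSpace ℝ (Fin 2))
      (p₁ := v 2) (p₂ := v 0) (v 1) h02
    rw [EuclideanGeometry.angle_comm (v 2) (v 0) (v 1),
      EuclideanGeometry.angle_comm (v 1) (v 2) (v 0)] at h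
    rw [hA, hB, hC]
    linarith
  -- edge vectors
  set a := v 1 - v 0 with ha
  set b := v 2 - v 0 with hb
  set c := v 2 - v 1 with hc
  have haz : a ≠ 0 := sub_ne_zero.2 h01.symm
  have hbz : b ≠ 0 := sub_ne_zero.2 h02.symm
  have hcz : c ≠ 0 := sub_ne_zero.2 h12.symm
  have han : ‖a‖ ≠ 0 := norm_ne_zero_iff.2 haz
  have hbn : ‖b‖ ≠ 0 := norm_ne_zero_iff.2 hbz
  have hcn : ‖c‖ ≠ 0 := norm_ne_zero_iff.2 hcz
  obtain ⟨θ1, ha0, ha1⟩ := polar a haz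
  obtain ⟨θ2, hb0, hb1⟩ := polar b hbz
  obtain ⟨θ3, hc0, hc1⟩ := polar c hcz
  -- cosine relations
  have hcosA : Real.cos A = Real.cos (θ2 - θ1) := by
    have h1 : Real.cos A = ⟪a, b⟫ / (‖a‖ * ‖b‖) := by
      rw [hA, EuclideanGeometry.angle, vsub_eq_sub, vsub_eq_sub, ← ha, ← hb]
      exact InnerProductGeometry.cos_angle a b
    rw [h1, inner_polar a b θ1 θ2 ha0 ha1 hb0 hb1,
      show θ2 - θ1 = -(θ1 - θ2) by ring, Real.cos_neg]
    field_simp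
  have hcosB : Real.cos B = -Real.cos (θ3 - θ1) := by
    have hv01 : v 0 - v 1 = -a := by rw [ha]; abel
    have h1 : Real.cos B = ⟪-a, c⟫ / (‖-a‖ * ‖c‖) := by
      rw [hB, EuclideanGeometry.angle, vsub_eq_sub, vsub_eq_sub, hv01, ← hc]
      exact InnerProductGeometry.cos_angle (-a) c
    rw [h1, inner_neg_left, inner_polar a c θ1 θ3 ha0 ha1 hc0 hc1, norm_neg,
      show θ3 - θ1 = -(θ1 - θ3) by ring, Real.cos_neg]
    field_simp
  have hcosC : Real.cos C = Real.cos (θ3 - θ2) := by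
    have hv02 : v 0 - v 2 = -b := by rw [hb]; abel
    have hv12 : v 1 - v 2 = -c := by rw [hc]; abel
    have h1 : Real.cos C = ⟪-b, -c⟫ / (‖-b‖ * ‖-c‖) := by
      rw [hC, EuclideanGeometry.angle, vsub_eq_sub, vsub_eq_sub, hv02, hv12]
      exact InnerProductGeometry.cos_angle (-b) (-c)
    rw [h1, inner_neg_neg, inner_polar b c θ2 θ3 hb0 hb1 hc0 hc1, norm_neg, norm_neg,
      show θ3 - θ2 = -(θ2 - θ3) by ring, Real.cos_neg]
    field_simp
  -- rigidity
  have hx2 : Real.cos (θ2 - θ1) = Real.cos A := hcosA.symm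
  have hx3 : Real.cos (θ3 - θ1) = Real.cos (A + C) := by
    rw [show A + C = π - B by linarith, Real.cos_pi_sub]
    linarith [hcosB]
  have hx23 : Real.cos ((θ3 - θ1) - (θ2 - θ1)) = Real.cos C := by
    rw [show (θ3 - θ1) - (θ2 - θ1) = θ3 - θ2 by ring]
    exact hcosC.symm
  obtain ⟨ε, hε, ⟨k, hk⟩, ⟨m, hm⟩⟩ :
      ∃ ε : ℝ, (ε = 1 ∨ ε = -1) ∧ (∃ k : ℤ, θ2 - θ1 = 2 * k * π + ε * A) ∧
        ∃ m : ℤ, θ3 - θ1 = 2 * m * π + ε * (A + C) := by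
    rcases cos_rigid hA0 hB0 hC0 hsum hx2 hx3 hx23 with ⟨⟨k, hk⟩, ⟨m, hm⟩⟩ | ⟨⟨k, hk⟩, ⟨m, hm⟩⟩
    · exact ⟨1, Or.inl rfl, ⟨k, by linarith⟩, ⟨m, by linarith⟩⟩
    · exact ⟨-1, Or.inr rfl, ⟨k, by linarith⟩, ⟨m, by linarith⟩⟩
  have hε2 : ε * ε = 1 := by rcases hε with h | h <;> rw [h] <;> norm_num
  have gg_eps : ∀ y : ℝ, gg (ε * y) = gg y := by
    rcases hε with h | h <;> intro y <;> rw [h]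
    · rw [one_mul]
    · rw [neg_one_mul, gg_even]
  -- reductions
  have red1 : ∀ φ : ℝ, gg (φ - θ1) = gg (ε * (φ - θ1)) := fun φ => (gg_eps _).symm
  have red2 : ∀ φ : ℝ, gg (φ - θ2) = gg (ε * (φ - θ1) - A) := by
    intro φ
    rw [show φ - θ2 = (φ - θ1 - ε * A) + ((-(2 * k) : ℤ) : ℝ) * π by push_cast; linarith,
      gg_int, ← gg_eps (φ - θ1 - ε * A)]
    congr 1
    linear_combination (-A) * hε2
  have red3 : ∀ φ : ℝ, gg (φ - θ3) = gg (ε * (φ - θ1) - A - C) := by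
    intro φ
    rw [show φ - θ3 = (φ - θ1 - ε * (A + C)) + ((-(2 * m) : ℤ) : ℝ) * π by push_cast; linarith,
      gg_int, ← gg_eps (φ - θ1 - ε * (A + C))]
    congr 1
    linear_combination (-(A + C)) * hε2
  -- values of the arccos expressions
  have val : ∀ (ξ : EuclideanSpace ℝ (Fin 2)) (φ : ℝ), ξ 0 = ‖ξ‖ * Real.cos φ →
      ξ 1 = ‖ξ‖ * Real.sin φ → ‖ξ‖ = 1 →
      Real.arccos (|⟪ξ, v 1 - v 0⟫| / dist (v 0) (v 1)) = gg (φ - θ1) ∧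
      Real.arccos (|⟪ξ, v 2 - v 0⟫| / dist (v 0) (v 2)) = gg (φ - θ2) ∧
      Real.arccos (|⟪ξ, v 2 - v 1⟫| / dist (v 1) (v 2)) = gg (φ - θ3) := by
    intro ξ φ hξ0 hξ1 hξn
    have key : ∀ (e : EuclideanSpace ℝ (Fin 2)) (θ : ℝ), e ≠ 0 → e 0 = ‖e‖ * Real.cos θ →
        e 1 = ‖e‖ * Real.sin θ → Real.arccos (|⟪ξ, e⟫| / ‖e‖) = gg (φ - θ) := by
      intro e θ hez he0 he1
      rw [inner_polar ξ e φ θ hξ0 hξ1 he0 he1, hξn, one_mul, abs_mul,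
        abs_of_nonneg (norm_nonneg e), mul_div_cancel_left₀ _ (norm_ne_zero_iff.2 hez)]
      rfl
    refine ⟨?_, ?_, ?_⟩
    · rw [show dist (v 0) (v 1) = ‖a‖ by rw [dist_eq_norm, norm_sub_rev, ← ha]]
      exact key a θ1 haz ha0 ha1
    · rw [show dist (v 0) (v 2) = ‖b‖ by rw [dist_eq_norm, norm_sub_rev, ← hb]]
      exact key b θ2 hbz hb0 hb1
    · rw [show dist (v 1) (v 2) = ‖c‖ by rw [dist_eq_norm, norm_sub_rev, ← hc]]
      exact key c θ3 hcz hc0 hc1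
  -- upper bound
  have hub : ∀ t ∈ {t : ℝ | ∃ ξ : EuclideanSpace ℝ (Fin 2), ‖ξ‖ = 1 ∧
      ∀ i j, i ≠ j → t ≤ Real.arccos (abs ⟪ξ, v j - v i⟫ / dist (v i) (v j))},
      t ≤ max A (max B C) / 2 := by
    rintro t ⟨ξ, hξn, hle⟩
    have hξz : ξ ≠ 0 := by
      intro h; rw [h, norm_zero] at hξn; norm_num at hξn
    obtain ⟨φ, hφ0, hφ1⟩ := polar ξ hξz
    obtain ⟨e1, e2, e3⟩ := val ξ φ hφ0 hφ1 hξn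
    have t1 := hle 0 1 (by decide)
    rw [e1, red1 φ] at t1
    have t2 := hle 0 2 (by decide)
    rw [e2, red2 φ] at t2
    have t3 := hle 1 2 (by decide)
    rw [e3, red3 φ] at t3
    rcases upper_core hA0 hB0 hC0 hsum (ε * (φ - θ1)) with h | h | h
    · linarith
    · linarith
    · linarith
  -- membership
  have hmem : max A (max B C) / 2 ∈ {t : ℝ | ∃ ξ : EuclideanSpace ℝ (Fin 2), ‖ξ‖ = 1 ∧
      ∀ i j, i ≠ j → t ≤ Real.arccos (abs ⟪ξ, v j - v i⟫ / dist (v i) (v j))} := by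
    obtain ⟨s₀, j1, j2, j3⟩ := exists_core hA0 hB0 hC0 hsum
    set φ := θ1 + ε * s₀ with hφ
    set ξ : EuclideanSpace ℝ (Fin 2) := !₂[Real.cos φ, Real.sin φ] with hξ
    have hξ0 : ξ 0 = Real.cos φ := rfl
    have hξ1 : ξ 1 = Real.sin φ := rfl
    have hξn : ‖ξ‖ = 1 := by
      have h := coord_sq_norm ξ
      rw [hξ0, hξ1] at h
      rw [← Real.sqrt_sq (norm_nonneg ξ), ← h, Real.cos_sq_add_sin_sq, Real.sqrt_one]
    have hε_id : ε * (φ - θ1) = s₀ := by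
      rw [hφ]; linear_combination s₀ * hε2
    obtain ⟨e1, e2, e3⟩ := val ξ φ (by rw [hξn, one_mul]; exact hξ0) (by rw [hξn, one_mul]; exact hξ1) hξn
    rw [red1 φ, hε_id] at e1
    rw [red2 φ, hε_id] at e2
    rw [red3 φ, hε_id] at e3
    refine ⟨ξ, hξn, ?_⟩
    have sym : ∀ i j : Fin 3, Real.arccos (|⟪ξ, v i - v j⟫| / dist (v j) (v i)) =
        Real.arccos (|⟪ξ, v j - v i⟫| / dist (v i) (v j)) := by
      intro i j
      rw [show v i - v j = -(v j - v i) by abel, inner_neg_right, abs_neg, dist_comm]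
    have p01 : max A (max B C) / 2 ≤
        Real.arccos (|⟪ξ, v 1 - v 0⟫| / dist (v 0) (v 1)) := by rw [e1]; exact j1
    have p10 : max A (max B C) / 2 ≤
        Real.arccos (|⟪ξ, v 0 - v 1⟫| / dist (v 1) (v 0)) := by rw [sym 0 1, e1]; exact j1
    have p02 : max A (max B C) / 2 ≤
        Real.arccos (|⟪ξ, v 2 - v 0⟫| / dist (v 0) (v 2)) := by rw [e2]; exact j2
    have p20 : max A (max B C) / 2 ≤
        Real.arccos (|⟪ξ, v 0 - v 2⟫| / dist (v 2) (v 0)) := by rw [sym 0 2, e2]; exact j2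
    have p12 : max A (max B C) / 2 ≤
        Real.arccos (|⟪ξ, v 2 - v 1⟫| / dist (v 1) (v 2)) := by rw [e3]; exact j3
    have p21 : max A (max B C) / 2 ≤
        Real.arccos (|⟪ξ, v 1 - v 2⟫| / dist (v 2) (v 1)) := by rw [sym 1 2, e3]; exact j3
    intro i j hij
    fin_cases i <;> fin_cases j <;>
      first
        | exact absurd rfl hij
        | exact p01
        | exact p10
        | exact p02
        | exact p20
        | exact p12
        | exact p21
  exact le_antisymm (csSup_le ⟨_, hmem⟩ hub) (le_csSup ⟨_, fun t ht => hub t ht⟩ hmem)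
end

section
/- Let K be a tetrahedron in ℝ^3 with maximum face/dihedral angle ψ realized by a dihedral angle. Then the coplanarity θ_K = max_{|ξ|=1} min_i arccos|ξ · u_i| satisfies θ_K ≥ ψ/2, where u_i are unit vectors along the edges of K. -/
open Real
open scoped RealInnerProductSpace

/-- Auxiliary computation: the interior bisector `(2 cos(ψ/2))⁻¹ • (a + b)` makes an angle of
at most `cos (ψ/2)` (in terms of the normalized inner product) with every vector
`x • w + y • a + z • b` with `y * z ≤ 0`. -/
theorem stmt10_key (ψ : ℝ) (w a b : EuclideanSpace ℝ (Fin 3))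
    (hw : ‖w‖ = 1) (ha : ‖a‖ = 1) (hb : ‖b‖ = 1)
    (haw : ⟪a, w⟫ = 0) (hbw : ⟪b, w⟫ = 0)
    (hab : ⟪a, b⟫ = Real.cos ψ)
    (cψ : ℝ) (hcψ : 0 < cψ) (hcos : Real.cos ψ = 2 * cψ ^ 2 - 1)
    (x y z : ℝ) (hyz : y * z ≤ 0) :
    |⟪(2 * cψ)⁻¹ • (a + b), x • w + y • a + z • b⟫| ≤ cψ * ‖x • w + y • a + z • b‖ := by
  have hwa : ⟪w, a⟫ = 0 := by rw [real_inner_comm]; exact haw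
  have hwb : ⟪w, b⟫ = 0 := by rw [real_inner_comm]; exact hbw
  have hba' : ⟪b, a⟫ = Real.cos ψ := by rw [real_inner_comm]; exact hab
  have haa : ⟪a, a⟫ = 1 := by rw [real_inner_self_eq_norm_sq, ha]; norm_num
  have hbb : ⟪b, b⟫ = 1 := by rw [real_inner_self_eq_norm_sq, hb]; norm_num
  have hww : ⟪w, w⟫ = 1 := by rw [real_inner_self_eq_norm_sq, hw]; norm_num
  have hinner : ⟪(2 * cψ)⁻¹ • (a + b), x • w + y • a + z • b⟫ = (y + z) * cψ := by
    simp only [real_inner_smul_left, inner_add_left, inner_add_right,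
      real_inner_smul_right, haa, hbb, hab, hba', hwa, hwb, hww, haw, hbw]
    rw [hcos]
    field_simp
    ring
  have hnormsq : ‖x • w + y • a + z • b‖ ^ 2
      = x ^ 2 + y ^ 2 + z ^ 2 + 2 * y * z * Real.cos ψ := by
    rw [← real_inner_self_eq_norm_sq]
    simp only [inner_add_left, inner_add_right, real_inner_smul_left,
      real_inner_smul_right, haa, hbb, hab, hba', hwa, hwb, hww, haw, hbw]
    ring
  have hsq : (y + z) ^ 2 ≤ ‖x • w + y • a + z • b‖ ^ 2 := by
    rw [hnormsq]; nlinarith [Real.cos_le_one ψ, sq_nonneg x]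
  have habs : |y + z| ≤ ‖x • w + y • a + z • b‖ := by
    nlinarith [abs_nonneg (y + z), norm_nonneg (x • w + y • a + z • b), sq_abs (y + z),
      sq_nonneg (|y + z| + ‖x • w + y • a + z • b‖)]
  rw [hinner, abs_mul, abs_of_pos hcψ]
  nlinarith

/-- Auxiliary degenerate case: if `ψ = π` the four points are coplanar, contradicting
affine independence. -/
theorem stmt10_degenerate (p : Fin 4 → EuclideanSpace ℝ (Fin 3))
    (hp : AffineIndependent ℝ p)
    (ψ : ℝ) (w a b : EuclideanSpace ℝ (Fin 3))
    (ha : ‖a‖ = 1) (hb : ‖b‖ = 1)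
    (hab : ⟪a, b⟫ = Real.cos ψ)
    (c0 α2 β2 α3 β3 : ℝ)
    (h1 : p 1 - p 0 = c0 • w)
    (h2 : p 2 - p 0 = α2 • w + β2 • a)
    (h3 : p 3 - p 0 = α3 • w + β3 • b)
    (h : ψ = π) : False := by
  classical
  have hba : b = -a := by
    have hn : ‖a + b‖ ^ 2 = 0 := by
      rw [norm_add_sq_real, ha, hb, hab, h, Real.cos_pi]; ring
    have h0 : a + b = 0 :=
      norm_eq_zero.mp (pow_eq_zero_iff (n := 2) (by norm_num) |>.mp hn)
    exact eq_neg_of_add_eq_zero_right h0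
  set W := Submodule.span ℝ ({w, a} : Set (EuclideanSpace ℝ (Fin 3))) with hW
  have hwW : w ∈ W := Submodule.subset_span (by simp)
  have haW : a ∈ W := Submodule.subset_span (by simp)
  have hmem : ∀ i : Fin 4, p i - p 0 ∈ W := by
    intro i
    fin_cases i
    · show p 0 - p 0 ∈ W
      simp
    · show p 1 - p 0 ∈ W
      rw [h1]; exact W.smul_mem _ hwW
    · show p 2 - p 0 ∈ W
      rw [h2]; exact W.add_mem (W.smul_mem _ hwW) (W.smul_mem _ haW)
    · show p 3 - p 0 ∈ W
      rw [h3, hba]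
      exact W.add_mem (W.smul_mem _ hwW) (W.smul_mem _ (W.neg_mem haW))
  have li := (affineIndependent_iff_linearIndependent_vsub ℝ p 0).mp hp
  have lig : LinearIndependent ℝ
      (fun i : {x : Fin 4 // x ≠ 0} => (⟨p i - p 0, hmem i⟩ : W)) := by
    apply LinearIndependent.of_comp W.subtype
    convert li using 1
    all_goals first | rfl | (funext i; rfl) | skip
  have hcard := lig.fintype_card_le_finrank
  have hfin : Module.finrank ℝ W ≤ 2 := by
    refine (finrank_span_le_card _).trans ?_
    rw [Set.toFinset_insert, Set.toFinset_singleton]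
    exact (Finset.card_insert_le _ _).trans (by simp)
  have hc3 : Fintype.card {x : Fin 4 // x ≠ 0} = 3 := by
    simp [Fintype.card_subtype_compl]
  omega

set_option maxHeartbeats 2000000 in
/-- Let `K` be a tetrahedron in `ℝ³` whose maximum face/dihedral angle `ψ` is
realized by a dihedral angle: all vertices lie in two planes meeting along an edge at angle
`ψ`.  Concretely the edge direction is a unit vector `w`, and unit vectors `a ⊥ w`, `b ⊥ w`
with `⟪a, b⟫ = cos ψ` span the two half-planes containing the other two vertices.  Then the
coplanarity `θ_K = max_{|ξ|=1} min_i arccos |ξ · u_i|` satisfies `θ_K ≥ ψ/2`. -/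
theorem stmt10 (p : Fin 4 → EuclideanSpace ℝ (Fin 3)) (hp : AffineIndependent ℝ p)
    (ψ : ℝ) (hψ0 : 0 ≤ ψ) (hψπ : ψ ≤ π)
    (w a b : EuclideanSpace ℝ (Fin 3))
    (hw : ‖w‖ = 1) (ha : ‖a‖ = 1) (hb : ‖b‖ = 1)
    (haw : ⟪a, w⟫ = 0) (hbw : ⟪b, w⟫ = 0)
    (hab : ⟪a, b⟫ = Real.cos ψ)
    (hedge : ∃ c : ℝ, p 1 - p 0 = c • w)
    (hv3 : ∃ α β : ℝ, 0 ≤ β ∧ p 2 - p 0 = α • w + β • a)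
    (hv4 : ∃ α β : ℝ, 0 ≤ β ∧ p 3 - p 0 = α • w + β • b) :
    ψ / 2 ≤ sSup {t : ℝ | ∃ ξ : EuclideanSpace ℝ (Fin 3), ‖ξ‖ = 1 ∧
      ∀ i j, i ≠ j → t ≤ Real.arccos (abs ⟪ξ, p j - p i⟫ / dist (p i) (p j))} := by
  obtain ⟨c0, h1⟩ := hedge
  obtain ⟨α2, β2, hβ2, h2⟩ := hv3
  obtain ⟨α3, β3, hβ3, h3⟩ := hv4
  have hψπ' : ψ < π := by
    rcases lt_or_eq_of_le hψπ with h | h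
    · exact h
    · exact absurd (stmt10_degenerate p hp ψ w a b ha hb hab c0 α2 β2 α3 β3 h1 h2 h3 h) id
  have hcψ : 0 < Real.cos (ψ / 2) :=
    Real.cos_pos_of_mem_Ioo ⟨by linarith [Real.pi_pos], by linarith⟩
  set cψ := Real.cos (ψ / 2) with hcψdef
  have hcψ1 : cψ ≤ 1 := Real.cos_le_one _
  have hcos : Real.cos ψ = 2 * cψ ^ 2 - 1 := by
    have h := Real.cos_sq (ψ / 2)
    rw [show 2 * (ψ / 2) = ψ by ring] at h
    rw [hcψdef]
    linarith
  set ξ := (2 * cψ)⁻¹ • (a + b) with hξdef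
  have hξnorm : ‖ξ‖ = 1 := by
    have hab2 : ‖a + b‖ ^ 2 = (2 * cψ) ^ 2 := by
      rw [norm_add_sq_real, ha, hb, hab, hcos]; ring
    have habn : ‖a + b‖ = 2 * cψ := by
      nlinarith [norm_nonneg (a + b)]
    rw [hξdef, norm_smul, habn, Real.norm_eq_abs, abs_of_pos (by positivity)]
    field_simp
  have key := stmt10_key ψ w a b hw ha hb haw hbw hab cψ hcψ hcos
  -- each edge difference has the right form
  have hpair : ∀ i j : Fin 4, i ≠ j → ∃ x y z : ℝ, y * z ≤ 0 ∧
      p j - p i = x • w + y • a + z • b := by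
    have e21 : p 2 - p 1 = (α2 - c0) • w + β2 • a + (0 : ℝ) • b := by
      have h : p 2 - p 1 = (p 2 - p 0) - (p 1 - p 0) := by abel
      rw [h, h1, h2]; module
    have e31 : p 3 - p 1 = (α3 - c0) • w + (0 : ℝ) • a + β3 • b := by
      have h : p 3 - p 1 = (p 3 - p 0) - (p 1 - p 0) := by abel
      rw [h, h1, h3]; module
    have e32 : p 3 - p 2 = (α3 - α2) • w + (-β2) • a + β3 • b := by
      have h : p 3 - p 2 = (p 3 - p 0) - (p 2 - p 0) := by abel
      rw [h, h2, h3]; module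
    have e10 : p 1 - p 0 = c0 • w + (0 : ℝ) • a + (0 : ℝ) • b := by
      rw [h1]; module
    have e20 : p 2 - p 0 = α2 • w + β2 • a + (0 : ℝ) • b := by
      rw [h2]; module
    have e30 : p 3 - p 0 = α3 • w + (0 : ℝ) • a + β3 • b := by
      rw [h3]; module
    have neg : ∀ i j : Fin 4, ∀ x y z : ℝ, p j - p i = x • w + y • a + z • b →
        p i - p j = (-x) • w + (-y) • a + (-z) • b := by
      intro i j x y z h
      have h' : p i - p j = -(p j - p i) := by abel
      rw [h', h]; module
    intro i j hij
    fin_cases i <;> fin_cases j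
    · exact absurd rfl hij
    · exact ⟨c0, 0, 0, by norm_num, e10⟩
    · exact ⟨α2, β2, 0, by norm_num, e20⟩
    · exact ⟨α3, 0, β3, by norm_num, e30⟩
    · exact ⟨-c0, -0, -0, by norm_num, neg _ _ _ _ _ e10⟩
    · exact absurd rfl hij
    · exact ⟨α2 - c0, β2, 0, by norm_num, e21⟩
    · exact ⟨α3 - c0, 0, β3, by norm_num, e31⟩
    · exact ⟨-α2, -β2, -0, by norm_num, neg _ _ _ _ _ e20⟩
    · exact ⟨-(α2 - c0), -β2, -0, by norm_num, neg _ _ _ _ _ e21⟩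
    · exact absurd rfl hij
    · exact ⟨α3 - α2, -β2, β3, by nlinarith, e32⟩
    · exact ⟨-α3, -0, -β3, by norm_num, neg _ _ _ _ _ e30⟩
    · exact ⟨-(α3 - c0), -0, -β3, by norm_num, neg _ _ _ _ _ e31⟩
    · exact ⟨-(α3 - α2), -(-β2), -β3, by nlinarith, neg _ _ _ _ _ e32⟩
    · exact absurd rfl hij
  -- membership
  have hmem : ψ / 2 ∈ {t : ℝ | ∃ ξ : EuclideanSpace ℝ (Fin 3), ‖ξ‖ = 1 ∧
      ∀ i j, i ≠ j → t ≤ Real.arccos (abs ⟪ξ, p j - p i⟫ / dist (p i) (p j))} := by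
    refine ⟨ξ, hξnorm, fun i j hij => ?_⟩
    obtain ⟨x, y, z, hyz, heq⟩ := hpair i j hij
    have hd : 0 < dist (p i) (p j) := dist_pos.mpr (fun h => hij (hp.injective h))
    have hdist : dist (p i) (p j) = ‖p j - p i‖ := by
      rw [dist_eq_norm, norm_sub_rev]
    have hle : |⟪ξ, p j - p i⟫| ≤ cψ * ‖p j - p i‖ := by
      rw [heq]; exact key x y z hyz
    set q := |⟪ξ, p j - p i⟫| / dist (p i) (p j) with hq
    have hq0 : 0 ≤ q := div_nonneg (abs_nonneg _) dist_nonneg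
    have hqc : q ≤ cψ := by
      rw [hq, div_le_iff₀ hd, hdist]
      exact hle
    by_contra hcon
    push_neg at hcon
    have h1' : Real.cos (ψ / 2) < Real.cos (Real.arccos q) :=
      Real.cos_lt_cos_of_nonneg_of_le_pi (Real.arccos_nonneg q) (by linarith) hcon
    rw [Real.cos_arccos (by linarith) (by linarith)] at h1'
    rw [← hcψdef] at h1'
    linarith
  refine le_csSup ⟨π, fun t ht => ?_⟩ hmem
  obtain ⟨ζ, hζ, h⟩ := ht
  exact (h 0 1 (by decide)).trans (Real.arccos_le_pi _)
end

section
/- Let K be a tetrahedron whose largest face/dihedral angle ψ is realized by the face angle at vertex v_1 in the triangle (v_1, v_2, v_3), with v_4 the remaining vertex and |v_2 - v_4| ≤ |v_3 - v_4|. Let ξ̂ be the unit normal to the plane through v_1, v_2, v_4. Then |ξ̂ · (v_3 - v_4)| / |v_3 - v_4| ≤ 2 cos(ψ - π/2), and consequently θ_K ≥ arccos(2 cos(ψ - π/2)) whenever 2cos(ψ - π/2) ≤ 1. -/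
open Real
open scoped RealInnerProductSpace

lemma my_arccos_le_arccos {x y : ℝ} (h : x ≤ y) : Real.arccos y ≤ Real.arccos x := by
  unfold Real.arccos
  have := Real.monotone_arcsin h
  linarith

lemma my_key {E : Type*} [NormedAddCommGroup E] [InnerProductSpace ℝ E]
    (ξ a b : E) (hξ : ‖ξ‖ = 1) (ha : a ≠ 0) (h : ⟪ξ, a⟫ = 0) :
    |⟪ξ, b⟫| ≤ ‖b‖ * Real.sin (InnerProductGeometry.angle a b) := by
  rcases eq_or_ne b 0 with rfl | hb
  · simp
  have hna : (0:ℝ) < ‖a‖ := norm_pos_iff.2 ha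
  have hnb : (0:ℝ) < ‖b‖ := norm_pos_iff.2 hb
  set c : ℝ := ⟪a, b⟫ / ‖a‖ ^ 2 with hc
  set w : E := b - c • a with hw
  have hwb : ⟪ξ, b⟫ = ⟪ξ, w⟫ := by
    simp [hw, inner_sub_right, inner_smul_right, h]
  have h1 : |⟪ξ, b⟫| ≤ ‖w‖ := by
    rw [hwb]
    calc |⟪ξ, w⟫| ≤ ‖ξ‖ * ‖w‖ := abs_real_inner_le_norm _ _
    _ = ‖w‖ := by rw [hξ, one_mul]
  refine h1.trans (le_of_eq ?_)
  have hns : ‖w‖ ^ 2 = ‖b‖ ^ 2 - ⟪a, b⟫ ^ 2 / ‖a‖ ^ 2 := by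
    have h3 : ‖w‖ ^ 2 = ⟪w, w⟫ := (real_inner_self_eq_norm_sq w).symm
    rw [h3, hw]
    simp only [inner_sub_left, inner_sub_right, inner_smul_left, inner_smul_right,
      RCLike.conj_to_real]
    rw [real_inner_self_eq_norm_sq b, real_inner_self_eq_norm_sq a, hc,
      real_inner_comm b a]
    field_simp
    ring
  have hsin := InnerProductGeometry.sin_angle_mul_norm_mul_norm a b
  have hsq : (‖b‖ * Real.sin (InnerProductGeometry.angle a b)) ^ 2 =
      ‖b‖ ^ 2 - ⟪a, b⟫ ^ 2 / ‖a‖ ^ 2 := by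
    have h2 : Real.sin (InnerProductGeometry.angle a b) =
        √(⟪a, a⟫ * ⟪b, b⟫ - ⟪a, b⟫ * ⟪a, b⟫) / (‖a‖ * ‖b‖) := by
      field_simp [← hsin]
      rw [sq, ← hsin]; ring
    rw [h2]
    have hcs : (0:ℝ) ≤ ⟪a, a⟫ * ⟪b, b⟫ - ⟪a, b⟫ * ⟪a, b⟫ :=
      sub_nonneg.2 (real_inner_mul_inner_self_le a b)
    rw [mul_pow, div_pow, Real.sq_sqrt hcs, real_inner_self_eq_norm_sq a,
      real_inner_self_eq_norm_sq b]
    field_simp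
  have hwn : 0 ≤ ‖w‖ := norm_nonneg w
  have hsn : 0 ≤ ‖b‖ * Real.sin (InnerProductGeometry.angle a b) :=
    mul_nonneg (norm_nonneg b) (Real.sin_nonneg_of_nonneg_of_le_pi
      (InnerProductGeometry.angle_nonneg a b) (InnerProductGeometry.angle_le_pi a b))
  nlinarith [hns, hsq]

lemma my_sin_le {α ψ : ℝ} (h0 : 0 ≤ α) (h1 : α ≤ ψ) (h2 : α + ψ ≤ π) :
    Real.sin α ≤ Real.sin ψ := by
  rcases le_total ψ (π / 2) with h | h
  · exact Real.sin_le_sin_of_le_of_le_pi_div_two (by linarith) h h1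
  · rw [← Real.sin_pi_sub ψ]
    exact Real.sin_le_sin_of_le_of_le_pi_div_two (by linarith) (by linarith) (by linarith)

/-- Let `K = conv{v₁, v₂, v₃, v₄}` (here `v 0, v 1, v 2, v 3`) be a
nondegenerate tetrahedron whose largest face/dihedral angle `ψ` is realized by the face angle
at `v₁` in the triangle `(v₁, v₂, v₃)` (in particular `ψ` dominates the other angles of this
triangle), with `|v₂ - v₄| ≤ |v₃ - v₄|`.  Let `ξ` be the unit normal to the plane through
`v₁, v₂, v₄`.  Then `|ξ · (v₃ - v₄)| / |v₃ - v₄| ≤ 2 cos(ψ - π/2)` and, whenever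
`2 cos(ψ - π/2) ≤ 1`, the coplanarity satisfies `θ_K ≥ arccos(2 cos(ψ - π/2))`. -/
theorem stmt11 (v : Fin 4 → EuclideanSpace ℝ (Fin 3)) (hv : AffineIndependent ℝ v)
    (ψ : ℝ)
    (hψdef : ψ = EuclideanGeometry.angle (v 1) (v 0) (v 2))
    (hψmax1 : EuclideanGeometry.angle (v 0) (v 1) (v 2) ≤ ψ)
    (hψmax2 : EuclideanGeometry.angle (v 0) (v 2) (v 1) ≤ ψ)
    (hdist : dist (v 1) (v 3) ≤ dist (v 2) (v 3))
    (ξ : EuclideanSpace ℝ (Fin 3)) (hξ : ‖ξ‖ = 1)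
    (hξ1 : ⟪ξ, v 1 - v 0⟫ = 0) (hξ2 : ⟪ξ, v 3 - v 0⟫ = 0) :
    abs ⟪ξ, v 2 - v 3⟫ / dist (v 3) (v 2) ≤ 2 * Real.cos (ψ - π / 2) ∧
      (2 * Real.cos (ψ - π / 2) ≤ 1 →
        Real.arccos (2 * Real.cos (ψ - π / 2)) ≤
          sSup {t : ℝ | ∃ ζ : EuclideanSpace ℝ (Fin 3), ‖ζ‖ = 1 ∧
            ∀ i j, i ≠ j → t ≤ Real.arccos (abs ⟪ζ, v j - v i⟫ / dist (v i) (v j))}) := by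
  have hinj : Function.Injective v := hv.injective
  have hne : ∀ i j : Fin 4, i ≠ j → v i ≠ v j := fun i j hij h => hij (hinj h)
  have hdpos : ∀ i j : Fin 4, i ≠ j → 0 < dist (v i) (v j) :=
    fun i j hij => dist_pos.2 (hne i j hij)
  -- cos(ψ - π/2) = sin ψ
  have hcos : Real.cos (ψ - π / 2) = Real.sin ψ := by
    rw [show ψ - π / 2 = -(π / 2 - ψ) by ring, Real.cos_neg, Real.cos_pi_div_two_sub]
  -- ψ is an angle, so sin ψ ≥ 0
  have hψ0 : 0 ≤ ψ := hψdef ▸ EuclideanGeometry.angle_nonneg _ _ _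
  have hψπ : ψ ≤ π := hψdef ▸ EuclideanGeometry.angle_le_pi _ _ _
  have hsψ : 0 ≤ Real.sin ψ := Real.sin_nonneg_of_nonneg_of_le_pi hψ0 hψπ
  -- angle identities
  have hangle0 : InnerProductGeometry.angle (v 1 - v 0) (v 2 - v 0) = ψ := by
    rw [hψdef, EuclideanGeometry.angle, vsub_eq_sub, vsub_eq_sub]
  have hangle1 : InnerProductGeometry.angle (v 0 - v 1) (v 2 - v 1) =
      EuclideanGeometry.angle (v 0) (v 1) (v 2) := by
    rw [EuclideanGeometry.angle, vsub_eq_sub, vsub_eq_sub]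
  -- angle sum at v0, v1, v2
  have hsum := EuclideanGeometry.angle_add_angle_add_angle_eq_pi
    (p₁ := v 0) (p₂ := v 1) (v 2) (hne 1 0 (by decide))
  have hcomm : EuclideanGeometry.angle (v 2) (v 0) (v 1) = ψ := by
    rw [hψdef, EuclideanGeometry.angle_comm]
  have hαsum : EuclideanGeometry.angle (v 0) (v 1) (v 2) + ψ ≤ π := by
    have h3 := EuclideanGeometry.angle_nonneg (v 1) (v 2) (v 0)
    rw [hcomm] at hsum; linarith
  -- B1 : pair (0,2)
  have hB1 : |⟪ξ, v 2 - v 0⟫| ≤ ‖v 2 - v 0‖ * Real.sin ψ := by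
    have := my_key ξ (v 1 - v 0) (v 2 - v 0) hξ
      (sub_ne_zero.2 (hne 1 0 (by decide))) hξ1
    rwa [hangle0] at this
  -- B2 : pair (1,2)
  have hξ1' : ⟪ξ, v 0 - v 1⟫ = 0 := by
    have : v 0 - v 1 = -(v 1 - v 0) := by abel
    rw [this, inner_neg_right, hξ1, neg_zero]
  have hB2 : |⟪ξ, v 2 - v 1⟫| ≤ ‖v 2 - v 1‖ * Real.sin ψ := by
    have h1 := my_key ξ (v 0 - v 1) (v 2 - v 1) hξ
      (sub_ne_zero.2 (hne 0 1 (by decide))) hξ1'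
    rw [hangle1] at h1
    refine h1.trans (mul_le_mul_of_nonneg_left ?_ (norm_nonneg _))
    exact my_sin_le (EuclideanGeometry.angle_nonneg _ _ _) hψmax1 hαsum
  -- B3 : pair (3,2)
  have heq32 : ⟪ξ, v 2 - v 3⟫ = ⟪ξ, v 2 - v 1⟫ := by
    have : v 2 - v 3 = (v 2 - v 1) + (v 1 - v 0) - (v 3 - v 0) := by abel
    rw [this, inner_sub_right, inner_add_right, hξ1, hξ2, add_zero, sub_zero]
  have hB3 : |⟪ξ, v 2 - v 3⟫| ≤ 2 * Real.sin ψ * dist (v 3) (v 2) := by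
    rw [heq32]
    refine hB2.trans ?_
    have htri : ‖v 2 - v 1‖ ≤ 2 * dist (v 3) (v 2) := by
      have h1 : dist (v 2) (v 1) ≤ dist (v 2) (v 3) + dist (v 3) (v 1) := dist_triangle _ _ _
      have h2 : dist (v 3) (v 1) = dist (v 1) (v 3) := dist_comm _ _
      have h3 : dist (v 2) (v 3) = dist (v 3) (v 2) := dist_comm _ _
      have h4 : ‖v 2 - v 1‖ = dist (v 2) (v 1) := (dist_eq_norm _ _).symm
      linarith
    nlinarith [abs_nonneg ⟪ξ, v 2 - v 1⟫, norm_nonneg (v 2 - v 1)]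
  have habs : ∀ x y : EuclideanSpace ℝ (Fin 3), |⟪ξ, x - y⟫| = |⟪ξ, y - x⟫| := by
    intro x y
    have : x - y = -(y - x) := by abel
    rw [this, inner_neg_right, abs_neg]
  constructor
  · rw [div_le_iff₀ (hdpos 3 2 (by decide)), hcos]
    exact hB3
  · intro _
    set S : Set ℝ := {t : ℝ | ∃ ζ : EuclideanSpace ℝ (Fin 3), ‖ζ‖ = 1 ∧
      ∀ i j, i ≠ j → t ≤ Real.arccos (|⟪ζ, v j - v i⟫| / dist (v i) (v j))} with hS
    have hbdd : BddAbove S := by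
      refine ⟨π, fun t ht => ?_⟩
      obtain ⟨ζ, -, hζ⟩ := ht
      exact (hζ 0 1 (by decide)).trans (Real.arccos_le_pi _)
    have hratio : ∀ i j : Fin 4, i ≠ j →
        |⟪ξ, v j - v i⟫| / dist (v i) (v j) ≤ 2 * Real.cos (ψ - π / 2) := by
      intro i j hij
      rw [div_le_iff₀ (hdpos i j hij), hcos]
      have hξ13 : ⟪ξ, v 3 - v 1⟫ = 0 := by
        have : v 3 - v 1 = (v 3 - v 0) - (v 1 - v 0) := by abel
        rw [this, inner_sub_right, hξ1, hξ2, sub_zero]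
      have hzero : ∀ i' j' : Fin 4, i' ≠ j' → ⟪ξ, v j' - v i'⟫ = 0 →
          |⟪ξ, v j' - v i'⟫| ≤ 2 * Real.sin ψ * dist (v i') (v j') := by
        intro i' j' hij' hz
        rw [hz, abs_zero]
        positivity
      have hwith2 : ∀ i' : Fin 4, i' ≠ 2 → |⟪ξ, v 2 - v i'⟫| ≤ ‖v 2 - v i'‖ * Real.sin ψ →
          |⟪ξ, v 2 - v i'⟫| ≤ 2 * Real.sin ψ * dist (v i') (v 2) := by
        intro i' _ hb
        refine hb.trans ?_
        rw [show ‖v 2 - v i'‖ = dist (v i') (v 2) by rw [dist_eq_norm']]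
        nlinarith [hdpos i' 2 ‹i' ≠ 2›]
      have hξ2' : ⟪ξ, v 0 - v 3⟫ = 0 := by
        have : v 0 - v 3 = -(v 3 - v 0) := by abel
        rw [this, inner_neg_right, hξ2, neg_zero]
      have hξ13' : ⟪ξ, v 1 - v 3⟫ = 0 := by
        have : v 1 - v 3 = -(v 3 - v 1) := by abel
        rw [this, inner_neg_right, hξ13, neg_zero]
      have hwith2' : ∀ i' : Fin 4, i' ≠ 2 → |⟪ξ, v 2 - v i'⟫| ≤ ‖v 2 - v i'‖ * Real.sin ψ →
          |⟪ξ, v i' - v 2⟫| ≤ 2 * Real.sin ψ * dist (v 2) (v i') := by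
        intro i' h hb
        rw [habs, dist_comm]
        exact hwith2 i' h hb
      fin_cases i <;> fin_cases j
      · exact absurd rfl hij
      · exact hzero 0 1 (by decide) hξ1
      · exact hwith2 0 (by decide) hB1
      · exact hzero 0 3 (by decide) hξ2
      · exact hzero 1 0 (by decide) hξ1'
      · exact absurd rfl hij
      · exact hwith2 1 (by decide) hB2
      · exact hzero 1 3 (by decide) hξ13
      · exact hwith2' 0 (by decide) hB1
      · exact hwith2' 1 (by decide) hB2
      · exact absurd rfl hij
      · rw [habs, dist_comm]; exact hB3
      · exact hzero 3 0 (by decide) hξ2'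
      · exact hzero 3 1 (by decide) hξ13'
      · exact hB3
      · exact absurd rfl hij
    have hmem : Real.arccos (2 * Real.cos (ψ - π / 2)) ∈ S := by
      refine ⟨ξ, hξ, fun i j hij => my_arccos_le_arccos (hratio i j hij)⟩
    exact le_csSup hbdd hmem
end

section
/- Let u_1, u_2, u_3 be unit vectors in ℝ^3 with |(u_1 × u_2) · u_3| ≥ m^3 for some m ∈ (0,1]. Then for every unit vector ξ ∈ ℝ^3, max_i |ξ · u_i| ≥ min{ m^3/√2, (1/√2) cos((π - arcsin(m^3))/2) }. -/
open Real Matrix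
open scoped RealInnerProductSpace

private lemma auxMono (a s : ℝ) (ha : 0 ≤ a) (has : a ≤ s) (hs : s ≤ 3/4) :
    a*((3-a)/2)^2 ≤ s*((3-s)/2)^2 := by
  nlinarith [mul_nonneg (sub_nonneg.mpr has) (by linarith : (0:ℝ) ≤ 3/4 - s),
    mul_nonneg (sub_nonneg.mpr has) (by linarith : (0:ℝ) ≤ 3/4 - a),
    mul_nonneg (sub_nonneg.mpr has) (sq_nonneg s),
    mul_nonneg (sub_nonneg.mpr has) (sq_nonneg a),
    mul_nonneg (mul_nonneg (sub_nonneg.mpr has) ha) (le_trans ha has)]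

private lemma aux3 (a b g c : ℝ) (ha : 0 ≤ a) (hb : 0 ≤ b) (hg : 0 ≤ g)
    (hsum : a + b + g = 3) (hc : 0 ≤ c) (hc2 : c ≤ 1/2) (hmin : a ≤ 3*c^2) :
    a*b*g ≤ 8*c^2*(1-2*c^2) := by
  have hbg : (3:ℝ) - a = b + g := by linarith
  have h1 : a*b*g ≤ a*((3-a)/2)^2 := by
    rw [hbg]; nlinarith [mul_nonneg ha (sq_nonneg (b - g))]
  have h14 : (0:ℝ) ≤ 1/4 - c^2 := by nlinarith
  have h2 : a*((3-a)/2)^2 ≤ (3*c^2)*((3-3*c^2)/2)^2 :=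
    auxMono a (3*c^2) ha hmin (by nlinarith)
  have h3 : (3*c^2)*((3-3*c^2)/2)^2 ≤ 8*c^2*(1-2*c^2) := by
    nlinarith [mul_nonneg (sq_nonneg c) h14,
      mul_nonneg (mul_nonneg (sq_nonneg c) (sq_nonneg c)) h14]
  linarith

private lemma gram_bound (u : Fin 3 → EuclideanSpace ℝ (Fin 3)) (hu : ∀ i, ‖u i‖ = 1)
    (ξ : EuclideanSpace ℝ (Fin 3)) (hξ : ‖ξ‖ = 1) (c : ℝ)
    (hw : ∀ i, |(⟪ξ, u i⟫:ℝ)| ≤ c) (hc2 : c ≤ 1/2) :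
    (Matrix.det (Matrix.of fun i j => u i j))^2 ≤ 8*c^2*(1-2*c^2) := by
  have hc0 : (0:ℝ) ≤ c := le_trans (abs_nonneg _) (hw 0)
  set U : Matrix (Fin 3) (Fin 3) ℝ := Matrix.of fun i j => u i j with hU
  set T : Matrix (Fin 3) (Fin 3) ℝ := Uᴴ * U with hTdef
  have hT : T.IsHermitian := Matrix.isHermitian_conjTranspose_mul_self U
  set e := hT.eigenvalues with he
  have hnn : ∀ i, 0 ≤ e i := (Matrix.posSemidef_conjTranspose_mul_self U).eigenvalues_nonneg
  have hunit : ∀ i, (∑ j, (u i j) * (u i j)) = 1 := by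
    intro i
    have h := real_inner_self_eq_norm_sq (u i)
    rw [hu i] at h
    rw [PiLp.inner_apply] at h; norm_num at h
    simpa [sq] using h
  have htrace : T.trace = 3 := by
    have h1 : T.trace = ∑ j, ∑ i, (u i j) * (u i j) := by
      simp [Matrix.trace, Matrix.diag, hTdef, Matrix.mul_apply, Matrix.conjTranspose_apply, hU]
    rw [h1, Finset.sum_comm]
    simp [hunit]
  have hV := Matrix.mem_unitaryGroup_iff'.mp (Matrix.IsHermitian.eigenvectorUnitary hT).2
  have htr2 : e 0 + e 1 + e 2 = 3 := by
    have h3 : T.trace = ∑ i, e i := by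
      conv_lhs => rw [hT.spectral_theorem]
      rw [Unitary.conjStarAlgAut_apply, Matrix.trace_mul_cycle, hV, Matrix.one_mul, Matrix.trace_diagonal]
      simp [he]
    rw [htrace, Fin.sum_univ_three] at h3
    linarith
  have hdet : U.det ^ 2 = e 0 * e 1 * e 2 := by
    have h5 := hT.det_eq_prod_eigenvalues
    rw [Fin.prod_univ_three] at h5
    have h4 : T.det = U.det ^ 2 := by
      rw [hTdef, Matrix.det_mul, Matrix.det_conjTranspose]
      simp [sq]
    rw [h4] at h5
    simpa using h5
  set B := hT.eigenvectorBasis with hB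
  set y : Fin 3 → ℝ := fun j => ⟪B j, ξ⟫ with hy
  have hyj : ∀ j, (⟪B j, ξ⟫:ℝ) = y j := fun j => rfl
  have hyn : y 0^2 + y 1^2 + y 2^2 = 1 := by
    have h := B.sum_inner_mul_inner ξ ξ
    have h2 : (⟪ξ, ξ⟫:ℝ) = 1 := by rw [real_inner_self_eq_norm_sq, hξ]; norm_num
    rw [Fin.sum_univ_three, h2] at h
    have hcomm : ∀ j : Fin 3, (⟪ξ, B j⟫:ℝ) = y j := fun j => by
      rw [real_inner_comm]
    rw [hcomm 0, hcomm 1, hcomm 2, hyj 0, hyj 1, hyj 2] at h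
    nlinarith [h]
  have hQ : ∀ x z : EuclideanSpace ℝ (Fin 3),
      (∑ i, (⟪x, u i⟫:ℝ) * ⟪z, u i⟫) = (fun j => x j) ⬝ᵥ (T *ᵥ (fun j => z j)) := by
    intro x z
    simp only [hTdef, hU, dotProduct, Matrix.mulVec, Matrix.mul_apply,
      Matrix.conjTranspose_apply, Matrix.of_apply, PiLp.inner_apply, RCLike.inner_apply,
      conj_trivial, star_trivial, Fin.sum_univ_three]
    ring
  have horth : ∀ j k, (∑ i, (⟪B j, u i⟫:ℝ) * ⟪B k, u i⟫) = if j = k then e k else 0 := by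
    intro j k
    rw [hQ]
    have h6 := hT.mulVec_eigenvectorBasis k
    rw [← hB] at h6
    have h6' : ∀ l, (T *ᵥ fun j' => B k j') l = e k * B k l := fun l => by
      have h := congrFun h6 l
      simpa using h
    have h7 : ((fun j' => B j j') ⬝ᵥ (T *ᵥ fun j' => B k j')) = e k * ∑ l, B j l * B k l := by
      simp only [dotProduct, h6', Finset.mul_sum]
      exact Finset.sum_congr rfl (fun l _ => by ring)
    have h8 := orthonormal_iff_ite.mp B.orthonormal j k
    have h9 : (∑ l, B j l * B k l) = (⟪B j, B k⟫:ℝ) := by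
      simp [PiLp.inner_apply]; exact Finset.sum_congr rfl fun _ _ => mul_comm _ _
    rw [h7, h9, h8]
    simp [mul_ite]
  have hrepr : ∀ i, (⟪ξ, u i⟫:ℝ) = ∑ j, y j * ⟪B j, u i⟫ := by
    intro i
    conv_lhs => rw [← B.sum_repr' ξ]
    rw [sum_inner]
    congr 1
    funext j
    rw [real_inner_smul_left, hyj j]
  have hform : (⟪ξ, u 0⟫:ℝ)^2 + (⟪ξ, u 1⟫:ℝ)^2 + (⟪ξ, u 2⟫:ℝ)^2
      = e 0 * y 0^2 + e 1 * y 1^2 + e 2 * y 2^2 := by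
    have h00 := horth 0 0; have h11 := horth 1 1; have h22 := horth 2 2
    have h01 := horth 0 1; have h02 := horth 0 2; have h12 := horth 1 2
    rw [Fin.sum_univ_three] at h00 h11 h22 h01 h02 h12
    simp only [Fin.reduceEq, reduceIte, if_true, if_false] at h00 h11 h22 h01 h02 h12
    rw [hrepr 0, hrepr 1, hrepr 2]
    simp only [Fin.sum_univ_three]
    linear_combination (y 0^2) * h00 + (y 1^2) * h11 + (y 2^2) * h22
      + (2*(y 0)*(y 1)) * h01 + (2*(y 0)*(y 2)) * h02 + (2*(y 1)*(y 2)) * h12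
  have hwc : ∀ i, (⟪ξ, u i⟫:ℝ)^2 ≤ c^2 := fun i => by
    nlinarith [hw i, abs_nonneg (⟪ξ, u i⟫:ℝ), sq_abs (⟪ξ, u i⟫:ℝ)]
  set μ := min (e 0) (min (e 1) (e 2)) with hμdef
  have m0 : μ ≤ e 0 := min_le_left _ _
  have m1 : μ ≤ e 1 := le_trans (min_le_right _ _) (min_le_left _ _)
  have m2 : μ ≤ e 2 := le_trans (min_le_right _ _) (min_le_right _ _)
  have hμ : μ ≤ 3*c^2 := by
    have step : μ * (y 0^2 + y 1^2 + y 2^2) ≤ e 0 * y 0^2 + e 1 * y 1^2 + e 2 * y 2^2 := by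
      nlinarith [mul_nonneg (sub_nonneg.mpr m0) (sq_nonneg (y 0)),
        mul_nonneg (sub_nonneg.mpr m1) (sq_nonneg (y 1)),
        mul_nonneg (sub_nonneg.mpr m2) (sq_nonneg (y 2))]
    rw [hyn, mul_one] at step
    have := hwc 0; have := hwc 1; have := hwc 2
    linarith [hform]
  have hcase : μ = e 0 ∨ μ = e 1 ∨ μ = e 2 := by
    rcases min_choice (e 0) (min (e 1) (e 2)) with h | h
    · exact Or.inl h
    · rcases min_choice (e 1) (e 2) with h2 | h2
      · exact Or.inr (Or.inl (h.trans h2))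
      · exact Or.inr (Or.inr (h.trans h2))
  show U.det^2 ≤ 8*c^2*(1-2*c^2)
  rcases hcase with h | h | h
  · calc U.det^2 = e 0 * e 1 * e 2 := hdet
      _ ≤ _ := aux3 (e 0) (e 1) (e 2) c (hnn 0) (hnn 1) (hnn 2) (by linarith) hc0 hc2
          (by rw [← h]; exact hμ)
  · calc U.det^2 = e 1 * e 0 * e 2 := by rw [hdet]; ring
      _ ≤ _ := aux3 (e 1) (e 0) (e 2) c (hnn 1) (hnn 0) (hnn 2) (by linarith) hc0 hc2
          (by rw [← h]; exact hμ)
  · calc U.det^2 = e 2 * e 0 * e 1 := by rw [hdet]; ring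
      _ ≤ _ := aux3 (e 2) (e 0) (e 1) c (hnn 2) (hnn 0) (hnn 1) (by linarith) hc0 hc2
          (by rw [← h]; exact hμ)

/-- Let `u₁, u₂, u₃` be unit vectors in `ℝ³` whose scalar triple product
(the determinant of the matrix with rows `uᵢ`) has absolute value at least `m³` for
some `m ∈ (0,1]`.  Then every unit vector `ξ` satisfies
`max_i |ξ · u_i| ≥ min { m³/√2, (1/√2) cos((π - arcsin(m³))/2) }`. -/
theorem stmt12 (u : Fin 3 → EuclideanSpace ℝ (Fin 3)) (hu : ∀ i, ‖u i‖ = 1)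
    (m : ℝ) (hm0 : 0 < m) (hm1 : m ≤ 1)
    (hdet : m ^ 3 ≤ |Matrix.det (Matrix.of fun i j => u i j)|)
    (ξ : EuclideanSpace ℝ (Fin 3)) (hξ : ‖ξ‖ = 1) :
    min (m ^ 3 / Real.sqrt 2)
        ((1 / Real.sqrt 2) * Real.cos ((π - Real.arcsin (m ^ 3)) / 2)) ≤
      max (abs ⟪ξ, u 0⟫) (max (abs ⟪ξ, u 1⟫) (abs ⟪ξ, u 2⟫)) := by
  set cm := max (abs (⟪ξ, u 0⟫:ℝ)) (max (abs (⟪ξ, u 1⟫:ℝ)) (abs (⟪ξ, u 2⟫:ℝ))) with hcm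
  have hw : ∀ i, |(⟪ξ, u i⟫:ℝ)| ≤ cm := by
    intro i
    fin_cases i
    · exact le_max_left _ _
    · exact le_trans (le_max_left _ _) (le_max_right _ _)
    · exact le_trans (le_max_right _ _) (le_max_right _ _)
  have hc0 : 0 ≤ cm := le_trans (abs_nonneg _) (hw 0)
  have hs0 : (0:ℝ) ≤ m^3 := by positivity
  set s := m^3 with hsdef
  set θ := Real.arcsin s with hθ
  have hθ0 : 0 ≤ θ := Real.arcsin_nonneg.mpr hs0
  have hθtop : θ ≤ π/2 := Real.arcsin_le_pi_div_two s
  have hcosθ : Real.cos θ = Real.sqrt (1 - s^2) := Real.cos_arcsin s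
  have hkey : 1 - Real.cos θ ≤ 4*cm^2 := by
    by_cases hc : 1/2 ≤ cm
    · have h := Real.cos_arcsin_nonneg s
      rw [← hθ] at h
      nlinarith
    · push_neg at hc
      have hgram := gram_bound u hu ξ hξ cm hw (le_of_lt hc)
      have hdet2 : s^2 ≤ (Matrix.det (Matrix.of fun i j => u i j))^2 := by
        nlinarith [abs_nonneg (Matrix.det (Matrix.of fun i j => u i j)),
          sq_abs (Matrix.det (Matrix.of fun i j => u i j)), hdet]
      have hs8 : s^2 ≤ 8*cm^2*(1-2*cm^2) := le_trans hdet2 hgram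
      have hsq : (1 - 4*cm^2)^2 ≤ 1 - s^2 := by nlinarith
      have h5 : (1 - 4*cm^2) ≤ Real.sqrt (1 - s^2) := Real.le_sqrt_of_sq_le hsq
      rw [hcosθ]; linarith
  have hsin : Real.sin (θ/2) ≤ Real.sqrt 2 * cm := by
    have h1 : Real.sin (θ/2) = Real.sqrt ((1 - Real.cos θ)/2) :=
      Real.sin_half_eq_sqrt hθ0 (by nlinarith [Real.pi_pos])
    rw [h1]
    calc Real.sqrt ((1-Real.cos θ)/2) ≤ Real.sqrt (2*cm^2) :=
          Real.sqrt_le_sqrt (by linarith)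
      _ = Real.sqrt 2 * cm := by
          rw [Real.sqrt_mul (by norm_num) (cm^2), Real.sqrt_sq hc0]
  refine le_trans (min_le_right _ _) ?_
  rw [show (π - θ)/2 = π/2 - θ/2 by ring, Real.cos_pi_div_two_sub]
  have h2pos : (0:ℝ) < Real.sqrt 2 := by positivity
  calc 1/Real.sqrt 2 * Real.sin (θ/2) ≤ 1/Real.sqrt 2 * (Real.sqrt 2 * cm) := by
        exact mul_le_mul_of_nonneg_left hsin (by positivity)
    _ = cm := by
        rw [one_div, ← mul_assoc, inv_mul_cancel₀ (ne_of_gt h2pos), one_mul]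
end
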